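/- arXiv:math/0205179 — 3 statements merged into one kernel-verified Lean document; each statement's English description precedes it below -/
import Mathlib

section
/- A subset I ⊆ Φ₊ of the positive roots of a finite crystallographic root system is the inversion set I(w) of some Weyl group element w if and only if there exists a linear functional h on the ambient vector space such that I = {α ∈ Φ₊ : h(α) > 0} and Φ₊ \ I = {α ∈ Φ₊ : h(α) < 0}. -/
open scoped RealInnerProductSpace

variable {V : Type*} [NormedAddCommGroup V] [InnerProductSpace ℝ V] [FiniteDimensional ℝ V]

/-- The reflection in the hyperplane orthogonal to `α`. -/
noncomputable def rootReflection (α : V) : V ≃ₗᵢ[ℝ] V := Submodule.reflection (ℝ ∙ α)ᗮ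

/-- A finite crystallographic (reduced) root system in `V`. -/
structure IsRootSystem (Φ : Set V) : Prop where
  finite : Φ.Finite
  ne_zero : ∀ α ∈ Φ, α ≠ 0
  reflect_mem : ∀ α ∈ Φ, ∀ β ∈ Φ, rootReflection α β ∈ Φ
  crystal : ∀ α ∈ Φ, ∀ β ∈ Φ, ∃ k : ℤ, 2 * ⟪β, α⟫ / ⟪α, α⟫ = (k : ℝ)
  reduced : ∀ α ∈ Φ, ∀ t : ℝ, t • α ∈ Φ → t = 1 ∨ t = -1

/-- `P` is a system of positive roots for `Φ`, cut out by a linear functional. -/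
def IsPositiveSystem (Φ P : Set V) : Prop :=
  ∃ h : V →ₗ[ℝ] ℝ, (∀ α ∈ Φ, h α ≠ 0) ∧ P = {α ∈ Φ | 0 < h α}

/-- The Weyl group: the subgroup of isometries generated by the root reflections. -/
noncomputable def weylGroup (Φ : Set V) : Subgroup (V ≃ₗᵢ[ℝ] V) :=
  Subgroup.closure {g | ∃ α ∈ Φ, g = rootReflection α}

/-- The inversion set `I(w) = Φ₊ ∩ w(Φ₋)`. -/
def invSet (P : Set V) (w : V ≃ₗᵢ[ℝ] V) : Set V := P ∩ (⇑w '' (-P))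

/-- A simple root: a positive root that is not the sum of two positive roots. -/
def IsSimpleRoot (P : Set V) (α : V) : Prop :=
  α ∈ P ∧ ¬∃ β ∈ P, ∃ γ ∈ P, α = β + γ

/-- The length of `w`: minimal length of a word in simple reflections for `w`. -/
noncomputable def wlen (P : Set V) (w : V ≃ₗᵢ[ℝ] V) : ℕ :=
  sInf {n | ∃ l : List V, (∀ α ∈ l, IsSimpleRoot P α) ∧ l.length = n ∧
    (l.map rootReflection).prod = w}

/-- Bruhat order. -/
def bruhatLE (Φ P : Set V) : (V ≃ₗᵢ[ℝ] V) → (V ≃ₗᵢ[ℝ] V) → Prop :=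
  Relation.ReflTransGen fun a b =>
    (∃ α ∈ Φ, b = rootReflection α * a) ∧ wlen P a < wlen P b

def bruhatLT (Φ P : Set V) (a b : V ≃ₗᵢ[ℝ] V) : Prop := bruhatLE Φ P a b ∧ a ≠ b

/-- The parabolic subgroup generated by reflections in the roots of `J`. -/
noncomputable def parabolic (J : Set V) : Subgroup (V ≃ₗᵢ[ℝ] V) :=
  Subgroup.closure {g | ∃ α ∈ J, g = rootReflection α}

/-- Minimal length representatives of the cosets `W_J\W`. -/
def minReps (Φ P J : Set V) : Set (V ≃ₗᵢ[ℝ] V) :=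
  {v | v ∈ weylGroup Φ ∧ ∀ u ∈ parabolic J, wlen P v ≤ wlen P (u * v)}


set_option maxHeartbeats 1000000

theorem rootReflection_apply (α v : V) :
    rootReflection α v = v - (2 * ⟪v, α⟫ / ⟪α, α⟫) • α := by
  rw [rootReflection, Submodule.reflection_apply, Submodule.starProjection_orthogonal_val,
    Submodule.starProjection_singleton, real_inner_self_eq_norm_sq, real_inner_comm]
  match_scalars
  · ring
  · simp only [Algebra.algebraMap_self_apply]; ring

theorem rootReflection_self (α : V) : rootReflection α α = -α :=
  Submodule.reflection_orthogonalComplement_singleton_eq_neg α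

theorem rootReflection_invol (α v : V) : rootReflection α (rootReflection α v) = v :=
  Submodule.reflection_reflection _ v

theorem rootReflection_symm (α : V) : (rootReflection α).symm = rootReflection α :=
  Submodule.reflection_symm

theorem rootReflection_inv (α : V) : (rootReflection α)⁻¹ = rootReflection α := by
  ext v
  rw [LinearIsometryEquiv.coe_inv, rootReflection_symm]

theorem IsRootSystem.neg_mem {Φ : Set V} (hΦ : IsRootSystem Φ) {α : V} (hα : α ∈ Φ) :
    -α ∈ Φ := by
  have := hΦ.reflect_mem α hα α hα
  rwa [rootReflection_self] at this

theorem IsRootSystem.inner_self_pos {Φ : Set V} (hΦ : IsRootSystem Φ) {α : V} (hα : α ∈ Φ) :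
    0 < ⟪α, α⟫ := 
by
  rw [real_inner_self_eq_norm_sq]
  exact pow_pos (norm_pos_iff.mpr (hΦ.ne_zero α hα)) 2

/-- Key lemma: reflection in a simple positive root permutes the other positive roots. -/
theorem simple_reflect_pos {Φ : Set V} (hΦ : IsRootSystem Φ) (f : V →ₗ[ℝ] ℝ)
    (hf : ∀ α ∈ Φ, f α ≠ 0) {α : V} (hα : α ∈ Φ) (hfα : 0 < f α)
    (hsimp : ∀ β γ : V, β ∈ Φ → 0 < f β → γ ∈ Φ → 0 < f γ → α ≠ β + γ)
    {β : V} (hβ : β ∈ Φ) (hfβ : 0 < f β) (hne : β ≠ α) :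
    rootReflection α β ∈ Φ ∧ 0 < f (rootReflection α β) := by
  have hsβΦ : rootReflection α β ∈ Φ := hΦ.reflect_mem α hα β hβ
  refine ⟨hsβΦ, ?_⟩
  by_contra hneg
  have hfsβ : f (rootReflection α β) < 0 :=
    lt_of_le_of_ne (not_lt.mp hneg) (hf _ hsβΦ)
  obtain ⟨k, hk⟩ := hΦ.crystal α hα β hβ
  obtain ⟨k', hk'⟩ := hΦ.crystal β hβ α hα
  have hαα : 0 < ⟪α, α⟫ := hΦ.inner_self_pos hα
  have hββ : 0 < ⟪β, β⟫ := hΦ.inner_self_pos hβ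
  have hsβ : rootReflection α β = β - (k : ℝ) • α := by
    rw [rootReflection_apply, hk]
  have hfsβ' : f β - (k : ℝ) * f α < 0 := by
    have := hfsβ
    rw [hsβ, map_sub, map_smul, smul_eq_mul] at this
    exact this
  have hkpos : (0 : ℝ) < (k : ℝ) := by
    by_contra hc
    push_neg at hc
    nlinarith
  have hk1 : (1 : ℤ) ≤ k := by
    have : (0:ℤ) < k := by exact_mod_cast hkpos
    omega
  have hkval : 2 * ⟪β, α⟫ = (k : ℝ) * ⟪α, α⟫ := by
    rw [div_eq_iff (ne_of_gt hαα)] at hk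
    linarith
  have hβα : 0 < ⟪β, α⟫ := by nlinarith
  have hk'pos : (0 : ℝ) < (k' : ℝ) := by
    rw [← hk']
    have : 0 < ⟪α, β⟫ := by rwa [real_inner_comm]
    positivity
  have hk'1 : (1 : ℤ) ≤ k' := by
    have : (0:ℤ) < k' := by exact_mod_cast hk'pos
    omega
  -- strict Cauchy-Schwarz: β, α not proportional
  have hcs : ⟪β, α⟫ < ‖β‖ * ‖α‖ := by
    rw [inner_lt_norm_mul_iff_real]
    intro hcontra
    have hα0 : ‖β‖ ≠ 0 := norm_ne_zero_iff.mpr (hΦ.ne_zero β hβ)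
    have hβ0 : ‖α‖ ≠ 0 := norm_ne_zero_iff.mpr (hΦ.ne_zero α hα)
    have hβeq : β = (‖β‖ / ‖α‖) • α := by
      have : (‖α‖)⁻¹ • (‖α‖ • β) = (‖α‖)⁻¹ • (‖β‖ • α) := by rw [hcontra]
      rwa [smul_smul, smul_smul, inv_mul_cancel₀ hβ0, one_smul, ← div_eq_inv_mul] at this
    have ht := hΦ.reduced α hα (‖β‖ / ‖α‖) (by rw [← hβeq]; exact hβ)
    have hdpos : 0 < ‖β‖ / ‖α‖ := by positivity
    rcases ht with h1 | h1
    · rw [h1, one_smul] at hβeq; exact hne hβeq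
    · rw [h1] at hdpos; norm_num at hdpos
  -- k * k' < 4
  have hkk' : (k : ℝ) * (k' : ℝ) < 4 := by
    rw [← hk, ← hk']
    rw [div_mul_div_comm]
    rw [div_lt_iff₀ (by positivity)]
    have hc : ⟪α, β⟫ = ⟪β, α⟫ := real_inner_comm β α
    have h1 : ⟪β, α⟫ * ⟪β, α⟫ < (‖β‖ * ‖α‖) * (‖β‖ * ‖α‖) := by nlinarith
    have h2 : ⟪α, α⟫ = ‖α‖ ^ 2 := real_inner_self_eq_norm_sq α
    have h3 : ⟪β, β⟫ = ‖β‖ ^ 2 := real_inner_self_eq_norm_sq β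
    nlinarith
  have hkk'3 : k * k' ≤ 3 := by
    have h4 : ((k * k' : ℤ) : ℝ) < 4 := by push_cast; exact hkk'
    have : (k * k' : ℤ) < 4 := by exact_mod_cast h4
    omega
  have hk3 : k ≤ 3 := le_trans (le_mul_of_one_le_right (by linarith) hk'1) hkk'3
  -- helper to produce contradictions from decompositions
  have contra : ∀ β' γ' : V, β' ∈ Φ → 0 < f β' → γ' ∈ Φ → 0 < f γ' → α = β' + γ' → False :=
    fun β' γ' h1 h2 h3 h4 h5 => hsimp β' γ' h1 h2 h3 h4 h5
  have hnegsβ : -(rootReflection α β) ∈ Φ := hΦ.neg_mem hsβΦ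
  have hfnegsβ : 0 < f (-(rootReflection α β)) := by rw [map_neg]; linarith
  -- case k = 1
  rcases (by omega : k = 1 ∨ k = 2 ∨ k = 3) with rfl | hk23
  · -- s β = β - α, so α = β + (-(s β))
    exact contra β (-(rootReflection α β)) hβ hfβ hnegsβ hfnegsβ
      (by rw [hsβ]; push_cast; module)
  · -- k ∈ {2,3} forces k' = 1
    have hk'eq : k' = 1 := by
      have hk2 : 2 ≤ k := by omega
      by_contra hc
      have : 2 ≤ k' := by omega
      nlinarith
    -- α - β = s_β α ∈ Φ
    have hαβΦ : α - β ∈ Φ := by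
      have := hΦ.reflect_mem β hβ α hα
      rwa [rootReflection_apply, hk', hk'eq, Int.cast_one, one_smul] at this
    rcases lt_or_gt_of_ne (hf _ hαβΦ) with hfab | hfab
    · -- f (α - β) < 0 : use β - α ∈ Φ positive
      have hβαΦ : β - α ∈ Φ := by have := hΦ.neg_mem hαβΦ; rwa [neg_sub] at this
      have hfβα : 0 < f (β - α) := by
        have : f (α - β) < 0 := hfab
        rw [map_sub] at this ⊢; linarith
      rcases hk23 with rfl | rfl
      · -- k = 2 : α = (β - α) + (2α - β), 2α - β = -(s β)
        exact contra (β - α) (-(rootReflection α β)) hβαΦ hfβα hnegsβ hfnegsβ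
          (by rw [hsβ]; push_cast; module)
      · -- k = 3 : consider β - 2α = s_α (β - α)
        have hb2a : β - (2:ℝ) • α ∈ Φ := by
          have := hΦ.reflect_mem α hα (β - α) hβαΦ
          rw [rootReflection_apply] at this
          have hinner : 2 * ⟪β - α, α⟫ / ⟪α, α⟫ = 1 := by
            rw [inner_sub_left]
            have : 2 * ⟪β, α⟫ / ⟪α, α⟫ = 3 := by rw [hk]; norm_num
            field_simp at this ⊢
            linarith
          rw [hinner, one_smul] at this
          have hE : β - α - α = β - (2:ℝ) • α := by module
          rwa [hE] at this
        rcases lt_or_gt_of_ne (hf _ hb2a) with hfb2a | hfb2a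
        · -- f(β - 2α) < 0 : α = (β - α) + (2α - β)
          have h2ab : (2:ℝ) • α - β ∈ Φ := by
            have := hΦ.neg_mem hb2a; rwa [neg_sub] at this
          have hf2ab : 0 < f ((2:ℝ) • α - β) := by
            have : f (β - (2:ℝ) • α) < 0 := hfb2a
            rw [map_sub] at this ⊢; linarith
          exact contra (β - α) ((2:ℝ) • α - β) hβαΦ hfβα h2ab hf2ab (by module)
        · -- f(β - 2α) > 0 : α = (β - 2α) + (3α - β), 3α - β = -(s β)
          exact contra (β - (2:ℝ) • α) (-(rootReflection α β)) hb2a hfb2a hnegsβ hfnegsβ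
            (by rw [hsβ]; push_cast; module)
    · -- f (α - β) > 0 : α = β + (α - β)
      exact contra β (α - β) hβ hfβ hαβΦ hfab (by module)

theorem image_simple {Φ : Set V} (hΦ : IsRootSystem Φ) (f : V →ₗ[ℝ] ℝ)
    (hf : ∀ α ∈ Φ, f α ≠ 0) {α : V} (hα : α ∈ Φ) (hfα : 0 < f α)
    (hsimp : ∀ β γ : V, β ∈ Φ → 0 < f β → γ ∈ Φ → 0 < f γ → α ≠ β + γ) :
    ⇑(rootReflection α) '' {β ∈ Φ | 0 < f β}
      = insert (-α) ({β ∈ Φ | 0 < f β} \ {α}) := by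
  have hsne : ∀ β ∈ Φ, 0 < f β → rootReflection α β ≠ α := by
    intro β hβ hfβ hc
    have : β = -α := by
      have := congrArg (rootReflection α) hc
      rwa [rootReflection_invol, rootReflection_self] at this
    rw [this, map_neg] at hfβ
    linarith
  ext γ
  constructor
  · rintro ⟨β, ⟨hβΦ, hfβ⟩, rfl⟩
    by_cases hβα : β = α
    · subst hβα; rw [rootReflection_self]; exact Set.mem_insert _ _
    · obtain ⟨h1, h2⟩ := simple_reflect_pos hΦ f hf hα hfα hsimp hβΦ hfβ hβα
      exact Set.mem_insert_of_mem _ ⟨⟨h1, h2⟩, hsne β hβΦ hfβ⟩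
  · rintro (rfl | ⟨⟨hγΦ, hfγ⟩, hγα⟩)
    · exact ⟨α, ⟨hα, hfα⟩, rootReflection_self α⟩
    · obtain ⟨h1, h2⟩ := simple_reflect_pos hΦ f hf hα hfα hsimp hγΦ hfγ hγα
      exact ⟨rootReflection α γ, ⟨h1, h2⟩, rootReflection_invol α γ⟩

theorem image_pos_eq {Φ : Set V} (hΦ : IsRootSystem Φ) (f : V →ₗ[ℝ] ℝ)
    {α : V} (hα : α ∈ Φ) :
    ⇑(rootReflection α) '' {β ∈ Φ | 0 < f β}
      = {β ∈ Φ | 0 < f (rootReflection α β)} := by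
  ext γ
  constructor
  · rintro ⟨β, ⟨hβΦ, hfβ⟩, rfl⟩
    refine ⟨hΦ.reflect_mem α hα β hβΦ, ?_⟩
    rwa [rootReflection_invol]
  · rintro ⟨hγΦ, hfγ⟩
    exact ⟨rootReflection α γ, ⟨hΦ.reflect_mem α hα γ hγΦ, hfγ⟩, rootReflection_invol α γ⟩

theorem rootReflection_mem_weyl {Φ : Set V} {α : V} (hα : α ∈ Φ) :
    rootReflection α ∈ weylGroup Φ :=
  Subgroup.subset_closure ⟨α, hα, rfl⟩

theorem weyl_maps {Φ : Set V} (hΦ : IsRootSystem Φ) {w : V ≃ₗᵢ[ℝ] V}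
    (hw : w ∈ weylGroup Φ) : ∀ β ∈ Φ, w β ∈ Φ := by
  have H : (∀ β ∈ Φ, w β ∈ Φ) ∧ (∀ β ∈ Φ, w⁻¹ β ∈ Φ) := by
    induction hw using Subgroup.closure_induction with
    | mem g hg =>
      obtain ⟨α, hα, rfl⟩ := hg
      refine ⟨hΦ.reflect_mem α hα, ?_⟩
      rw [rootReflection_inv]
      exact hΦ.reflect_mem α hα
    | one => simp
    | mul x y hx hy ihx ihy =>
      constructor
      · intro β hβ
        rw [LinearIsometryEquiv.coe_mul, Function.comp_apply]
        exact ihx.1 _ (ihy.1 β hβ)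
      · intro β hβ
        rw [mul_inv_rev, LinearIsometryEquiv.coe_mul, Function.comp_apply]
        exact ihy.2 _ (ihx.2 β hβ)
    | inv x hx ih =>
      refine ⟨ih.2, ?_⟩
      simpa using ih.1
  exact H.1

/-- Any two positive systems are conjugate under the Weyl group. -/
theorem conj_positive {Φ : Set V} (hΦ : IsRootSystem Φ) :
    ∀ n : ℕ, ∀ f g : V →ₗ[ℝ] ℝ, (∀ α ∈ Φ, f α ≠ 0) → (∀ α ∈ Φ, g α ≠ 0) →
    {α ∈ Φ | 0 < f α ∧ g α < 0}.ncard = n →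
    ∃ w ∈ weylGroup Φ, ⇑w '' {α ∈ Φ | 0 < f α} = {α ∈ Φ | 0 < g α} := by
  intro n
  induction n with
  | zero =>
    intro f g hf hg hcard
    have hfin : {α ∈ Φ | 0 < f α ∧ g α < 0}.Finite :=
      hΦ.finite.subset (fun x hx => hx.1)
    have hemp : {α ∈ Φ | 0 < f α ∧ g α < 0} = ∅ := (Set.ncard_eq_zero hfin).mp hcard
    refine ⟨1, one_mem _, ?_⟩
    rw [LinearIsometryEquiv.coe_one, Set.image_id]
    ext α
    constructor
    · rintro ⟨hαΦ, hfα⟩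
      refine ⟨hαΦ, ?_⟩
      rcases lt_or_gt_of_ne (hg α hαΦ) with h | h
      · exfalso
        have : α ∈ {α ∈ Φ | 0 < f α ∧ g α < 0} := ⟨hαΦ, hfα, h⟩
        rw [hemp] at this
        simp at this
      · exact h
    · rintro ⟨hαΦ, hgα⟩
      refine ⟨hαΦ, ?_⟩
      rcases lt_or_gt_of_ne (hf α hαΦ) with h | h
      · exfalso
        have hnαΦ : -α ∈ Φ := hΦ.neg_mem hαΦ
        have : -α ∈ {α ∈ Φ | 0 < f α ∧ g α < 0} := by
          refine ⟨hnαΦ, ?_, ?_⟩ <;> rw [map_neg] <;> linarith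
        rw [hemp] at this; simp at this
      · exact h
  | succ n ih =>
    intro f g hf hg hcard
    set S := {α ∈ Φ | 0 < f α ∧ g α < 0} with hS
    have hfin : S.Finite := hΦ.finite.subset (fun x hx => hx.1)
    have hne : S.Nonempty := by
      rw [Set.nonempty_iff_ne_empty]
      intro hc
      rw [hc, Set.ncard_empty] at hcard
      omega
    obtain ⟨α, hαS, hmin⟩ := Set.exists_min_image S f hfin hne
    obtain ⟨hαΦ, hfα, hgα⟩ := hαS
    -- α is simple
    have hsimp : ∀ β γ : V, β ∈ Φ → 0 < f β → γ ∈ Φ → 0 < f γ → α ≠ β + γ := by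
      intro β γ hβ hfβ hγ hfγ heq
      have hadd : f α = f β + f γ := by rw [heq, map_add]
      have hgadd : g α = g β + g γ := by rw [heq, map_add]
      have : g β < 0 ∨ g γ < 0 := by
        by_contra hc
        push_neg at hc
        linarith [hc.1, hc.2]
      rcases this with h | h
      · have : f α ≤ f β := hmin β ⟨hβ, hfβ, h⟩
        linarith
      · have : f α ≤ f γ := hmin γ ⟨hγ, hfγ, h⟩
        linarith
    -- new functional
    set g' : V →ₗ[ℝ] ℝ := f.comp ((rootReflection α).toLinearEquiv : V →ₗ[ℝ] V) with hg'
    have hg'app : ∀ β, g' β = f (rootReflection α β) := fun β => rfl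
    have hg'0 : ∀ β ∈ Φ, g' β ≠ 0 := by
      intro β hβ
      rw [hg'app]
      exact hf _ (hΦ.reflect_mem α hαΦ β hβ)
    have himg : ⇑(rootReflection α) '' {β ∈ Φ | 0 < f β} = {β ∈ Φ | 0 < g' β} := by
      rw [image_pos_eq hΦ f hαΦ]
      rfl
    have himg2 : {β ∈ Φ | 0 < g' β} = insert (-α) ({β ∈ Φ | 0 < f β} \ {α}) := by
      rw [← himg, image_simple hΦ f hf hαΦ hfα hsimp]
    -- new inversion count
    have hS' : {β ∈ Φ | 0 < g' β ∧ g β < 0} = S \ {α} := by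
      ext β
      constructor
      · rintro ⟨hβΦ, hg'β, hgβ⟩
        have hβmem : β ∈ insert (-α) ({β ∈ Φ | 0 < f β} \ {α}) := by
          rw [← himg2]; exact ⟨hβΦ, hg'β⟩
        rcases hβmem with rfl | ⟨⟨h1, h2⟩, h3⟩
        · exfalso
          rw [map_neg] at hgβ
          linarith
        · exact ⟨⟨h1, h2, hgβ⟩, h3⟩
      · rintro ⟨⟨hβΦ, hfβ, hgβ⟩, hβα⟩
        have : β ∈ {β ∈ Φ | 0 < g' β} := by
          rw [himg2]
          exact Set.mem_insert_of_mem _ ⟨⟨hβΦ, hfβ⟩, hβα⟩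
        exact ⟨this.1, this.2, hgβ⟩
    have hcard' : {β ∈ Φ | 0 < g' β ∧ g β < 0}.ncard = n := by
      rw [hS', Set.ncard_diff_singleton_of_mem (show α ∈ S from ⟨hαΦ, hfα, hgα⟩), hcard]
      omega
    obtain ⟨w', hw', himg'⟩ := ih g' g hg'0 hg hcard'
    refine ⟨w' * rootReflection α, mul_mem hw' (rootReflection_mem_weyl hαΦ), ?_⟩
    rw [LinearIsometryEquiv.coe_mul, Set.image_comp, himg, himg']


/-- a subset of the positive roots is an inversion set iff it is
cut out by a linear functional. -/
theorem inversion_set_iff_functional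
    (Φ P : Set V) (hΦ : IsRootSystem Φ) (hP : IsPositiveSystem Φ P)
    (I : Set V) (hI : I ⊆ P) :
    (∃ w ∈ weylGroup Φ, I = invSet P w) ↔
      ∃ h : V →ₗ[ℝ] ℝ, I = {α ∈ P | 0 < h α} ∧ P \ I = {α ∈ P | h α < 0} := by
  obtain ⟨f, hf0, hPdef⟩ := hP
  have hPsub : P ⊆ Φ := by rw [hPdef]; exact fun x hx => hx.1
  constructor
  · rintro ⟨w, hw, rfl⟩
    set hfun : V →ₗ[ℝ] ℝ := -(f.comp ((w.symm).toLinearEquiv : V →ₗ[ℝ] V)) with hhfun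
    have happ : ∀ γ, hfun γ = -(f (w.symm γ)) := fun _ => rfl
    have hwinv : ∀ β ∈ Φ, w.symm β ∈ Φ := by
      have := weyl_maps hΦ (inv_mem hw)
      simpa [LinearIsometryEquiv.coe_inv] using this
    have hmem : ∀ γ : V, γ ∈ ⇑w '' (-P) ↔ w.symm γ ∈ -P := by
      intro γ
      constructor
      · rintro ⟨a, ha, rfl⟩; simpa using ha
      · intro hγ; exact ⟨w.symm γ, hγ, by simp⟩
    have key : ∀ α ∈ P, (α ∈ ⇑w '' (-P) ↔ f (w.symm α) < 0) := by
      intro α hαP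
      rw [hmem, Set.mem_neg, hPdef]
      constructor
      · rintro ⟨_, hpos⟩
        rw [map_neg] at hpos
        linarith
      · intro hneg
        refine ⟨hΦ.neg_mem (hwinv α (hPsub hαP)), ?_⟩
        rw [map_neg]
        linarith
    refine ⟨hfun, ?_, ?_⟩
    · ext α
      simp only [invSet, Set.mem_inter_iff, Set.mem_setOf_eq]
      constructor
      · rintro ⟨hαP, hαim⟩
        refine ⟨hαP, ?_⟩
        have := (key α hαP).mp hαim
        rw [happ]
        linarith
      · rintro ⟨hαP, hhα⟩
        rw [happ] at hhα
        exact ⟨hαP, (key α hαP).mpr (by linarith)⟩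
    · ext α
      simp only [invSet, Set.mem_diff, Set.mem_inter_iff, Set.mem_setOf_eq]
      constructor
      · rintro ⟨hαP, hαnot⟩
        refine ⟨hαP, ?_⟩
        have hnotim : α ∉ ⇑w '' (-P) := fun hc => hαnot ⟨hαP, hc⟩
        have hne0 : f (w.symm α) ≠ 0 := hf0 _ (hwinv α (hPsub hαP))
        have : 0 < f (w.symm α) :=
          lt_of_le_of_ne (not_lt.mp (fun hc => hnotim ((key α hαP).mpr hc))) (Ne.symm hne0)
        rw [happ]
        linarith
      · rintro ⟨hαP, hhα⟩
        rw [happ] at hhα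
        refine ⟨hαP, ?_⟩
        rintro ⟨_, hαim⟩
        have := (key α hαP).mp hαim
        linarith
  · rintro ⟨h, hIdef, hPIdef⟩
    have hh0 : ∀ α ∈ Φ, h α ≠ 0 := by
      intro α hαΦ
      have main : ∀ β ∈ P, h β ≠ 0 := by
        intro β hβP
        by_cases hc : β ∈ I
        · rw [hIdef] at hc
          exact ne_of_gt hc.2
        · have : β ∈ P \ I := ⟨hβP, hc⟩
          rw [hPIdef] at this
          exact ne_of_lt this.2
      rcases lt_or_gt_of_ne (hf0 α hαΦ) with hneg | hpos
      · have hnP : -α ∈ P := by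
          rw [hPdef]
          exact ⟨hΦ.neg_mem hαΦ, by rw [map_neg]; linarith⟩
        have := main _ hnP
        rw [map_neg] at this
        intro he
        rw [he] at this
        simp at this
      · exact main α (by rw [hPdef]; exact ⟨hαΦ, hpos⟩)
    obtain ⟨w, hw, himg⟩ := conj_positive hΦ _ (-f) h
      (fun α hα => by simpa using hf0 α hα) hh0 rfl
    have hnegP : -P = {α ∈ Φ | 0 < (-f) α} := by
      ext γ
      rw [Set.mem_neg, hPdef]
      constructor
      · rintro ⟨h1, h2⟩
        refine ⟨by simpa using hΦ.neg_mem h1, ?_⟩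
        rw [map_neg] at h2
        simp only [LinearMap.neg_apply]
        linarith
      · rintro ⟨h1, h2⟩
        simp only [LinearMap.neg_apply] at h2
        exact ⟨hΦ.neg_mem h1, by rw [map_neg]; linarith⟩
    refine ⟨w, hw, ?_⟩
    rw [hIdef, invSet, hnegP, himg]
    ext α
    simp only [Set.mem_inter_iff, Set.mem_setOf_eq]
    exact ⟨fun ⟨h1, h2⟩ => ⟨h1, hPsub h1, h2⟩, fun ⟨h1, _, h2⟩ => ⟨h1, h2⟩⟩
end

section
/- Let Δ ⊂ Φ be a root subsystem and suppose v₁ ∈ W^J satisfies v₁(Δ) = Φ^J for some subset J of simple roots. Let u ∈ W_J and let u' = v₁⁻¹ u v₁ ∈ W_Δ. Then the flattening f_Δ(w) equals u' if and only if there exists v₂ ∈ W^J with w = v₁⁻¹ u v₂. -/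
open scoped RealInnerProductSpace

variable {V : Type*} [NormedAddCommGroup V] [InnerProductSpace ℝ V] [FiniteDimensional ℝ V]

set_option linter.unusedSectionVars false
namespace FlatAux

noncomputable def coeff (α x : V) : ℝ := 2 * ⟪α, x⟫ / ⟪α, α⟫

lemma rr_apply (α x : V) : rootReflection α x = x - coeff α x • α := by
  rw [rootReflection, Submodule.reflection_orthogonal_apply, Submodule.reflection_apply, coeff,
    Submodule.starProjection_singleton, real_inner_self_eq_norm_sq]
  rw [two_smul]
  simp only [RCLike.ofReal_real_eq_id, id_eq]
  module

lemma rr_self (α : V) : rootReflection α α = -α :=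
  Submodule.reflection_orthogonalComplement_singleton_eq_neg α

lemma rr_rr (α x : V) : rootReflection α (rootReflection α x) = x :=
  Submodule.reflection_reflection _ x

lemma rr_inv (α : V) : (rootReflection α)⁻¹ = rootReflection α := by
  show (rootReflection α).symm = rootReflection α
  rw [rootReflection, Submodule.reflection_symm]

lemma rr_sq (α : V) : rootReflection α * rootReflection α = 1 := by
  ext x; exact rr_rr α x

lemma coeff_map (g : V ≃ₗᵢ[ℝ] V) (α x : V) : coeff (g α) (g x) = coeff α x := by
  rw [coeff, coeff, LinearIsometryEquiv.inner_map_map, LinearIsometryEquiv.inner_map_map]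

lemma rr_conj (g : V ≃ₗᵢ[ℝ] V) (α : V) :
    rootReflection (g α) = g * rootReflection α * g⁻¹ := by
  ext x
  show rootReflection (g α) x = g (rootReflection α (g⁻¹ x))
  rw [rr_apply, rr_apply, map_sub, map_smul]
  have h1 : g (g⁻¹ x) = x := g.apply_symm_apply x
  rw [h1]
  have h2 : coeff α (g⁻¹ x) = coeff (g α) x := by
    rw [← coeff_map g α (g⁻¹ x), h1]
  rw [h2]

lemma rr_neg (α : V) : rootReflection (-α) = rootReflection α := by
  unfold rootReflection
  congr 1
  rw [show -α = (-1 : ℝ) • α by simp]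
  congr 1
  exact Submodule.span_singleton_smul_eq (by norm_num : IsUnit (-1 : ℝ)) α

end FlatAux
namespace FlatAux

/-- Bundled hypotheses: root system with a positivity functional. -/
structure Setup (Φ P : Set V) (h : V →ₗ[ℝ] ℝ) : Prop where
  rs : IsRootSystem Φ
  hne : ∀ α ∈ Φ, h α ≠ 0
  hPd : P = {α ∈ Φ | 0 < h α}

variable {Φ P : Set V} {h : V →ₗ[ℝ] ℝ}

lemma Setup.mem_P_iff (C : Setup Φ P h) {α : V} : α ∈ P ↔ α ∈ Φ ∧ 0 < h α := by
  rw [C.hPd]; rfl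

lemma Setup.P_sub (C : Setup Φ P h) : P ⊆ Φ := fun α hα => ((C.mem_P_iff).1 hα).1

lemma Setup.hpos (C : Setup Φ P h) {α : V} (hα : α ∈ P) : 0 < h α :=
  ((C.mem_P_iff).1 hα).2

lemma Setup.neg_mem_Φ (C : Setup Φ P h) {α : V} (hα : α ∈ Φ) : -α ∈ Φ := by
  have := C.rs.reflect_mem α hα α hα
  rwa [rr_self] at this

lemma Setup.dichot (C : Setup Φ P h) {α : V} (hα : α ∈ Φ) : α ∈ P ∨ -α ∈ P := by
  rcases lt_trichotomy (h α) 0 with h1 | h1 | h1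
  · right; rw [C.mem_P_iff]; refine ⟨C.neg_mem_Φ hα, ?_⟩; rw [map_neg]; linarith
  · exact absurd h1 (C.hne α hα)
  · left; exact (C.mem_P_iff).2 ⟨hα, h1⟩

lemma Setup.not_both (C : Setup Φ P h) {α : V} (h1 : α ∈ P) (h2 : -α ∈ P) : False := by
  have := C.hpos h1
  have := C.hpos h2
  rw [map_neg] at this
  linarith

lemma Setup.mem_P_of_not_neg (C : Setup Φ P h) {α : V} (hα : α ∈ Φ) (h2 : -α ∉ P) :
    α ∈ P := (C.dichot hα).resolve_right h2

lemma Setup.neg_P_of_not_mem (C : Setup Φ P h) {α : V} (hα : α ∈ Φ) (h2 : α ∉ P) :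
    -α ∈ P := (C.dichot hα).resolve_left h2

/-- Elements of the Weyl group preserve `Φ`. -/
lemma Setup.wstab (C : Setup Φ P h) {w : V ≃ₗᵢ[ℝ] V} (hw : w ∈ weylGroup Φ) :
    (∀ x ∈ Φ, w x ∈ Φ) ∧ (∀ x ∈ Φ, w⁻¹ x ∈ Φ) := by
  induction hw using Subgroup.closure_induction with
  | mem g hg =>
    obtain ⟨α, hα, rfl⟩ := hg
    constructor
    · exact fun x hx => C.rs.reflect_mem α hα x hx
    · rw [rr_inv]; exact fun x hx => C.rs.reflect_mem α hα x hx
  | one => exact ⟨fun x hx => hx, fun x hx => hx⟩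
  | mul a b _ _ ha hb =>
    refine ⟨fun x hx => ha.1 _ (hb.1 x hx), fun x hx => ?_⟩
    have : (a * b)⁻¹ x = b⁻¹ (a⁻¹ x) := by rw [mul_inv_rev]; rfl
    rw [this]; exact hb.2 _ (ha.2 x hx)
  | inv a _ ha => exact ⟨fun x hx => by rw [show (⇑a⁻¹) = ⇑a.symm from rfl]; exact ha.2 x hx,
      fun x hx => by rw [inv_inv]; exact ha.1 x hx⟩

lemma Setup.wmem (C : Setup Φ P h) {w : V ≃ₗᵢ[ℝ] V} (hw : w ∈ weylGroup Φ) {x : V}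
    (hx : x ∈ Φ) : w x ∈ Φ := (C.wstab hw).1 x hx

lemma Setup.winv (C : Setup Φ P h) {w : V ≃ₗᵢ[ℝ] V} (hw : w ∈ weylGroup Φ) {x : V}
    (hx : x ∈ Φ) : w⁻¹ x ∈ Φ := (C.wstab hw).2 x hx

/-- The set of simple roots. -/
def simples (P : Set V) : Set V := {α | IsSimpleRoot P α}

lemma simples_sub (P : Set V) : simples P ⊆ P := fun _ hα => hα.1

end FlatAux
namespace FlatAux

variable {Φ P : Set V} {h : V →ₗ[ℝ] ℝ}

/-- Expansion predicate: `α` is a nonnegative combination of simple roots. -/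
def HasExp (P : Set V) (α : V) : Prop :=
  ∃ f : V →₀ ℝ, ↑f.support ⊆ simples P ∧ (∀ x, 0 ≤ f x) ∧ (f.sum fun x c => c • x) = α

lemma hasExp_of_simple {α : V} (hs : IsSimpleRoot P α) : HasExp P α := by
  classical
  refine ⟨Finsupp.single α 1, ?_, ?_, ?_⟩
  · intro x hx
    rw [Finset.mem_coe] at hx
    have := Finsupp.support_single_subset hx
    rw [Finset.mem_singleton] at this
    subst this; exact hs
  · intro x
    rw [Finsupp.single_apply]
    split <;> norm_num
  · rw [Finsupp.sum_single_index (by simp)]; exact one_smul _ _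

lemma Setup.exists_expansion (C : Setup Φ P h) {α : V} (hα : α ∈ P) : HasExp P α := by
  classical
  have Pfin : P.Finite := C.rs.finite.subset C.P_sub
  suffices H : ∀ n : ℕ, ∀ α ∈ P, (Pfin.toFinset.filter (fun β => h β < h α)).card ≤ n →
      HasExp P α from H _ α hα le_rfl
  intro n
  induction n with
  | zero =>
    intro α hα hcard
    by_cases hs : IsSimpleRoot P α
    · exact hasExp_of_simple hs
    · exfalso
      rw [IsSimpleRoot] at hs
      push_neg at hs
      obtain ⟨β, hβ, γ, hγ, rfl⟩ := hs hα
      have hβmem : β ∈ Pfin.toFinset.filter (fun x => h x < h (β + γ)) := by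
        rw [Finset.mem_filter, Set.Finite.mem_toFinset]
        exact ⟨hβ, by rw [map_add]; linarith [C.hpos hγ]⟩
      have := Finset.card_pos.mpr ⟨β, hβmem⟩
      omega
  | succ n ih =>
    intro α hα hcard
    by_cases hs : IsSimpleRoot P α
    · exact hasExp_of_simple hs
    · rw [IsSimpleRoot] at hs
      push_neg at hs
      obtain ⟨β, hβ, γ, hγ, rfl⟩ := hs hα
      have key : ∀ β' γ' : V, β' ∈ P → γ' ∈ P → β' + γ' = β + γ →
          (Pfin.toFinset.filter (fun x => h x < h β')).card ≤ n := by
        intro β' γ' hβ' hγ' hsum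
        have hβmem : β' ∈ Pfin.toFinset.filter (fun x => h x < h (β + γ)) := by
          rw [Finset.mem_filter, Set.Finite.mem_toFinset]
          refine ⟨hβ', ?_⟩
          rw [← hsum, map_add]; linarith [C.hpos hγ']
        have hsub : Pfin.toFinset.filter (fun x => h x < h β') ⊆
            (Pfin.toFinset.filter (fun x => h x < h (β + γ))).erase β' := by
          intro x hx
          rw [Finset.mem_filter] at hx
          rw [Finset.mem_erase, Finset.mem_filter]
          refine ⟨fun hxe => ?_, hx.1, ?_⟩
          · subst hxe; exact lt_irrefl _ hx.2
          · rw [← hsum, map_add]; linarith [C.hpos hγ', hx.2]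
        have := Finset.card_le_card hsub
        rw [Finset.card_erase_of_mem hβmem] at this
        omega
      obtain ⟨f, hfs, hfn, hfe⟩ := ih β hβ (key β γ hβ hγ rfl)
      obtain ⟨g, hgs, hgn, hge⟩ := ih γ hγ (key γ β hγ hβ (add_comm γ β))
      refine ⟨f + g, ?_, ?_, ?_⟩
      · intro x hx
        rw [Finset.mem_coe] at hx
        have := Finsupp.support_add hx
        rw [Finset.mem_union] at this
        rcases this with h1 | h1
        · exact hfs h1
        · exact hgs h1
      · intro x
        rw [Finsupp.add_apply]
        exact add_nonneg (hfn x) (hgn x)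
      · rw [Finsupp.sum_add_index' (fun a => zero_smul ℝ a)
          (fun a b₁ b₂ => add_smul b₁ b₂ a), hfe, hge]

end FlatAux
namespace FlatAux

variable {Φ P : Set V} {h : V →ₗ[ℝ] ℝ}

lemma Setup.sub_mem_of_inner_pos (C : Setup Φ P h) {α β : V} (hαΦ : α ∈ Φ) (hβΦ : β ∈ Φ)
    (hne : β ≠ α) (hne' : β ≠ -α) (hip : 0 < ⟪α, β⟫) : α - β ∈ Φ := by
  obtain ⟨k, hk⟩ := C.rs.crystal α hαΦ β hβΦ
  obtain ⟨k', hk'⟩ := C.rs.crystal β hβΦ α hαΦ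
  have hα0 : α ≠ 0 := C.rs.ne_zero α hαΦ
  have hβ0 : β ≠ 0 := C.rs.ne_zero β hβΦ
  have hαn : (0:ℝ) < ‖α‖ := norm_pos_iff.mpr hα0
  have hβn : (0:ℝ) < ‖β‖ := norm_pos_iff.mpr hβ0
  have hαα : (0:ℝ) < ⟪α, α⟫ := by rw [real_inner_self_eq_norm_sq]; exact pow_pos hαn 2
  have hββ : (0:ℝ) < ⟪β, β⟫ := by rw [real_inner_self_eq_norm_sq]; exact pow_pos hβn 2
  have hba : ⟪β, α⟫ = ⟪α, β⟫ := real_inner_comm α β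
  have hk1 : 1 ≤ k := by
    have : (0:ℝ) < (k:ℝ) := by rw [← hk, hba]; exact div_pos (by linarith) hαα
    exact_mod_cast this
  have hk'1 : 1 ≤ k' := by
    have : (0:ℝ) < (k':ℝ) := by rw [← hk']; exact div_pos (by linarith) hββ
    exact_mod_cast this
  have hprod : (k:ℝ) * (k':ℝ) * (⟪α, α⟫ * ⟪β, β⟫) = 4 * (⟪α, β⟫ * ⟪α, β⟫) := by
    rw [← hk, ← hk', hba]
    field_simp
    ring
  have hCS : ⟪α, β⟫ * ⟪α, β⟫ ≤ ⟪α, α⟫ * ⟪β, β⟫ := real_inner_mul_inner_self_le α β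
  have hle4 : k * k' ≤ 4 := by
    have : (k:ℝ) * (k':ℝ) ≤ 4 := by
      rw [← mul_le_mul_iff_of_pos_right (mul_pos hαα hββ), hprod]
      nlinarith
    exact_mod_cast this
  by_cases heq : k * k' = 4
  · -- Cauchy-Schwarz equality case: β is proportional to α, contradiction
    exfalso
    have h4 : (k:ℝ) * (k':ℝ) = 4 := by exact_mod_cast heq
    have hCSeq : ⟪α, β⟫ * ⟪α, β⟫ = ⟪α, α⟫ * ⟪β, β⟫ := by
      rw [h4] at hprod
      nlinarith
    have hn : ⟪α, β⟫ = ‖α‖ * ‖β‖ := by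
      have h1 : ⟪α, α⟫ = ‖α‖ ^ 2 := real_inner_self_eq_norm_sq α
      have h2 : ⟪β, β⟫ = ‖β‖ ^ 2 := real_inner_self_eq_norm_sq β
      have h3 : (0:ℝ) ≤ ‖α‖ * ‖β‖ := by positivity
      nlinarith [hCSeq, hip]
    have hsm : ‖β‖ • α = ‖α‖ • β := inner_eq_norm_mul_iff_real.mp hn
    have hnα : ‖α‖ ≠ 0 := norm_ne_zero_iff.mpr hα0
    have ht : (‖β‖ / ‖α‖) • α = β := by
      rw [div_eq_inv_mul, mul_smul, hsm, ← mul_smul, inv_mul_cancel₀ hnα, one_smul]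
    rcases C.rs.reduced α hαΦ (‖β‖ / ‖α‖) (by rw [ht]; exact hβΦ) with h1 | h1
    · rw [h1, one_smul] at ht; exact hne ht.symm
    · rw [h1] at ht
      apply hne'
      rw [← ht, neg_smul, one_smul]
  · have h3 : k * k' ≤ 3 := by omega
    have hor : k = 1 ∨ k' = 1 := by
      by_contra hcon
      push_neg at hcon
      have : 2 ≤ k := by omega
      have : 2 ≤ k' := by omega
      nlinarith
    rcases hor with h1 | h1
    · -- s_α β = β - α
      have hc : coeff α β = 1 := by
        rw [coeff, ← hba, hk, h1]; norm_num
      have := C.rs.reflect_mem α hαΦ β hβΦ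
      rw [rr_apply, hc, one_smul] at this
      have := C.neg_mem_Φ this
      rwa [neg_sub] at this
    · -- s_β α = α - β
      have hc : coeff β α = 1 := by
        rw [coeff, hba, hk', h1]; norm_num
      have := C.rs.reflect_mem β hβΦ α hαΦ
      rwa [rr_apply, hc, one_smul] at this

lemma Setup.simples_obtuse (C : Setup Φ P h) {α β : V} (hα : α ∈ simples P)
    (hβ : β ∈ simples P) (hne : α ≠ β) : ⟪α, β⟫ ≤ 0 := by
  by_contra hcon
  push_neg at hcon
  have hαP := hα.1
  have hβP := hβ.1
  have hαΦ := C.P_sub hαP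
  have hβΦ := C.P_sub hβP
  have hne' : β ≠ -α := by
    intro he
    exact C.not_both hαP (he ▸ hβP)
  have hsub : α - β ∈ Φ := C.sub_mem_of_inner_pos hαΦ hβΦ (Ne.symm hne) hne' hcon
  rcases C.dichot hsub with h1 | h1
  · exact hα.2 ⟨β, hβP, α - β, h1, by abel⟩
  · rw [neg_sub] at h1
    exact hβ.2 ⟨α, hαP, β - α, h1, by abel⟩

end FlatAux
namespace FlatAux

variable {Φ P : Set V} {h : V →ₗ[ℝ] ℝ}

lemma Setup.coeff_zero (C : Setup Φ P h) {f : V →₀ ℝ} (hsupp : ↑f.support ⊆ simples P)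
    (hsum : (f.sum fun x c => c • x) = 0) : f = 0 := by
  classical
  set pos := f.support.filter (fun x => 0 < f x) with hposd
  set neg := f.support.filter (fun x => ¬ 0 < f x) with hnegd
  have hfy : ∀ y ∈ neg, f y < 0 := by
    intro y hy
    rw [hnegd, Finset.mem_filter] at hy
    rcases lt_or_eq_of_le (not_lt.mp hy.2) with h1 | h1
    · exact h1
    · exact absurd h1 (Finsupp.mem_support_iff.mp hy.1)
  have hfx : ∀ x ∈ pos, 0 < f x := fun x hx => (Finset.mem_filter.mp hx).2
  have hS : ∀ x, x ∈ pos ∨ x ∈ neg → x ∈ simples P := by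
    intro x hx
    rcases hx with hx | hx <;>
      exact hsupp (Finset.mem_coe.mpr (Finset.mem_filter.mp hx).1)
  have hsplit : (∑ x ∈ pos, f x • x) + (∑ x ∈ neg, f x • x) = 0 := by
    rw [hposd, hnegd, Finset.sum_filter_add_sum_filter_not]
    exact hsum
  set v := ∑ x ∈ pos, f x • x with hvd
  have hveq : v = ∑ y ∈ neg, (-(f y)) • y := by
    have : v = -∑ y ∈ neg, f y • y := by rw [eq_neg_iff_add_eq_zero]; exact hsplit
    rw [this, ← Finset.sum_neg_distrib]
    exact Finset.sum_congr rfl fun y _ => (neg_smul _ _).symm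
  have hv2 : ⟪v, v⟫ ≤ 0 := by
    nth_rewrite 2 [hveq]
    rw [hvd, sum_inner]
    refine Finset.sum_nonpos fun x hx => ?_
    rw [real_inner_smul_left, inner_sum]
    refine mul_nonpos_of_nonneg_of_nonpos (le_of_lt (hfx x hx)) ?_
    refine Finset.sum_nonpos fun y hy => ?_
    rw [real_inner_smul_right]
    have hxy : x ≠ y := by
      intro he
      exact absurd (he ▸ hfx x hx) (not_lt.mpr (le_of_lt (hfy y hy)))
    have hobs : ⟪x, y⟫ ≤ 0 := C.simples_obtuse (hS x (Or.inl hx)) (hS y (Or.inr hy)) hxy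
    have : 0 < -(f y) := by linarith [hfy y hy]
    nlinarith
  have hv0 : v = 0 := by
    have h1 : ⟪v, v⟫ = ‖v‖ ^ 2 := real_inner_self_eq_norm_sq v
    have : ‖v‖ = 0 := by nlinarith [norm_nonneg v]
    exact norm_eq_zero.mp this
  have hsum_h : ∀ (s : Finset V), h (∑ x ∈ s, f x • x) = ∑ x ∈ s, f x * h x := by
    intro s
    rw [map_sum]
    exact Finset.sum_congr rfl fun x _ => by rw [map_smul, smul_eq_mul]
  have hposE : pos = ∅ := by
    by_contra hne
    obtain ⟨x, hx⟩ := Finset.nonempty_of_ne_empty hne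
    have hall : ∀ y ∈ pos, 0 ≤ f y * h y := by
      intro y hy
      have hyS := hS y (Or.inl hy)
      exact le_of_lt (mul_pos (hfx y hy) (C.hpos (simples_sub P hyS)))
    have hone : 0 < f x * h x :=
      mul_pos (hfx x hx) (C.hpos (simples_sub P (hS x (Or.inl hx))))
    have : 0 < ∑ y ∈ pos, f y * h y := Finset.sum_pos' hall ⟨x, hx, hone⟩
    rw [← hsum_h pos, ← hvd, hv0, map_zero] at this
    exact lt_irrefl _ this
  have hnegsum : (∑ x ∈ neg, f x • x) = 0 := by
    rw [hv0, zero_add] at hsplit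
    exact hsplit
  have hnegE : neg = ∅ := by
    by_contra hne
    obtain ⟨x, hx⟩ := Finset.nonempty_of_ne_empty hne
    have h1 : ∑ y ∈ neg, f y * h y < 0 :=
      Finset.sum_neg (fun y hy => mul_neg_of_neg_of_pos (hfy y hy)
        (C.hpos (simples_sub P (hS y (Or.inr hy))))) ⟨x, hx⟩
    rw [← hsum_h neg, hnegsum, map_zero] at h1
    exact lt_irrefl _ h1
  have : f.support = ∅ := by
    have := Finset.filter_union_filter_not_eq (fun x => 0 < f x) f.support
    rw [← hposd, ← hnegd, hposE, hnegE] at this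
    simpa using this.symm
  exact Finsupp.support_eq_empty.mp this

lemma Setup.exp_unique (C : Setup Φ P h) {f g : V →₀ ℝ}
    (hf : ↑f.support ⊆ simples P) (hg : ↑g.support ⊆ simples P)
    (hs : (f.sum fun x c => c • x) = (g.sum fun x c => c • x)) : f = g := by
  classical
  have hz : ((f - g).sum fun x c => c • x) = 0 := by
    rw [Finsupp.sum_sub_index (fun a b1 b2 => sub_smul b1 b2 a), hs, sub_self]
  have hsupp : ↑(f - g).support ⊆ simples P := by
    intro x hx
    rw [Finset.mem_coe] at hx
    have := Finsupp.support_sub hx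
    rw [Finset.mem_union] at this
    rcases this with h1 | h1
    · exact hf h1
    · exact hg h1
  have := C.coeff_zero hsupp hz
  exact sub_eq_zero.mp this

end FlatAux
namespace FlatAux

variable {Φ P : Set V} {h : V →ₗ[ℝ] ℝ}

lemma Setup.srefl_pos (C : Setup Φ P h) {α β : V} (hα : α ∈ simples P) (hβ : β ∈ P)
    (hne : β ≠ α) : rootReflection α β ∈ P := by
  classical
  have hαP := simples_sub P hα
  have hαΦ := C.P_sub hαP
  have hβΦ := C.P_sub hβ
  have hγΦ : rootReflection α β ∈ Φ := C.rs.reflect_mem α hαΦ β hβΦ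
  by_contra hγP
  have hnγ : -(rootReflection α β) ∈ P := C.neg_P_of_not_mem hγΦ hγP
  obtain ⟨f, hfs, hfn, hfe⟩ := C.exists_expansion hβ
  obtain ⟨g, hgs, hgn, hge⟩ := C.exists_expansion hnγ
  have hkey : ((f + g).sum fun x c => c • x) =
      ((Finsupp.single α (coeff α β)).sum fun x c => c • x) := by
    rw [Finsupp.sum_add_index' (fun a => zero_smul ℝ a) (fun a b₁ b₂ => add_smul b₁ b₂ a),
      hfe, hge, Finsupp.sum_single_index (zero_smul ℝ α), rr_apply]
    abel
  have hfgs : ↑(f + g).support ⊆ simples P := by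
    intro x hx
    rw [Finset.mem_coe] at hx
    have := Finsupp.support_add hx
    rw [Finset.mem_union] at this
    rcases this with h1 | h1
    · exact hfs h1
    · exact hgs h1
  have hss : ↑(Finsupp.single α (coeff α β)).support ⊆ simples P := by
    intro x hx
    rw [Finset.mem_coe] at hx
    have := Finsupp.support_single_subset hx
    rw [Finset.mem_singleton] at this
    subst this; exact hα
  have huniq : f + g = Finsupp.single α (coeff α β) := C.exp_unique hfgs hss hkey
  have hfzero : ∀ x, x ≠ α → f x = 0 := by
    intro x hx
    have h1 : (f + g) x = 0 := by
      rw [huniq, Finsupp.single_apply, if_neg (fun he => hx he.symm)]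
    rw [Finsupp.add_apply] at h1
    have := hfn x
    have := hgn x
    linarith
  have hfsing : f = Finsupp.single α (f α) := by
    rw [← Finsupp.support_subset_singleton]
    intro x hx
    rw [Finset.mem_singleton]
    by_contra hxa
    exact (Finsupp.mem_support_iff.mp hx) (hfzero x hxa)
  have hβα : β = f α • α := by
    conv_lhs => rw [← hfe, hfsing]
    rw [Finsupp.sum_single_index (zero_smul ℝ α)]
  rcases C.rs.reduced α hαΦ (f α) (by rw [← hβα]; exact hβΦ) with h1 | h1
  · rw [h1, one_smul] at hβα; exact hne hβα
  · have := hfn α; rw [h1] at this; linarith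

lemma mem_invSet {Q : Set V} {w : V ≃ₗᵢ[ℝ] V} {β : V} :
    β ∈ invSet Q w ↔ β ∈ Q ∧ -(w⁻¹ β) ∈ Q := by
  unfold invSet
  constructor
  · rintro ⟨h1, γ, hγ, h2⟩
    refine ⟨h1, ?_⟩
    have hγ2 : w⁻¹ β = γ := by rw [← h2]; exact w.symm_apply_apply γ
    rw [hγ2]
    exact Set.mem_neg.mp hγ
  · rintro ⟨h1, h2⟩
    exact ⟨h1, w⁻¹ β, Set.mem_neg.mpr h2, w.apply_symm_apply β⟩

lemma inv_mul_apply (α : V) (w : V ≃ₗᵢ[ℝ] V) (x : V) :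
    (rootReflection α * w)⁻¹ x = w⁻¹ (rootReflection α x) := by
  rw [mul_inv_rev, rr_inv]; rfl

lemma Setup.invSet_sub (C : Setup Φ P h) (w : V ≃ₗᵢ[ℝ] V) : invSet P w ⊆ P :=
  fun _ hx => (mem_invSet.mp hx).1

lemma Setup.invSet_finite (C : Setup Φ P h) (w : V ≃ₗᵢ[ℝ] V) : (invSet P w).Finite :=
  (C.rs.finite.subset C.P_sub).subset (C.invSet_sub w)

lemma Setup.invSet_one (C : Setup Φ P h) : invSet P (1 : V ≃ₗᵢ[ℝ] V) = ∅ := by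
  ext β
  simp only [Set.mem_empty_iff_false, iff_false, mem_invSet]
  rintro ⟨h1, h2⟩
  exact C.not_both h1 h2

lemma Setup.invSet_mul_of_mem (C : Setup Φ P h) {α : V} {w : V ≃ₗᵢ[ℝ] V}
    (hα : α ∈ simples P) (hw : w ∈ weylGroup Φ) (hmem : α ∈ invSet P w) :
    invSet P (rootReflection α * w) = rootReflection α '' (invSet P w \ {α}) := by
  have hαP := simples_sub P hα
  have hαΦ := C.P_sub hαP
  ext β
  constructor
  · intro hβ
    rw [mem_invSet, inv_mul_apply] at hβ
    obtain ⟨hβP, hβneg⟩ := hβ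
    have hβα : β ≠ α := by
      rintro rfl
      rw [rr_self, map_neg, neg_neg] at hβneg
      exact C.not_both hβneg (mem_invSet.mp hmem).2
    have hrβP : rootReflection α β ∈ P := C.srefl_pos hα hβP hβα
    have hrβmem : rootReflection α β ∈ invSet P w := mem_invSet.mpr ⟨hrβP, hβneg⟩
    have hrβα : rootReflection α β ≠ α := by
      intro he
      have : β = -α := by
        have := congrArg (rootReflection α) he
        rwa [rr_rr, rr_self] at this
      rw [this] at hβP
      exact C.not_both hαP hβP
    exact ⟨rootReflection α β, ⟨hrβmem, hrβα⟩, rr_rr α β⟩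
  · rintro ⟨γ, ⟨hγmem, hγα⟩, rfl⟩
    rw [Set.mem_singleton_iff] at hγα
    obtain ⟨hγP, hγneg⟩ := mem_invSet.mp hγmem
    rw [mem_invSet, inv_mul_apply, rr_rr]
    exact ⟨C.srefl_pos hα hγP hγα, hγneg⟩

lemma Setup.invSet_mul_of_not_mem (C : Setup Φ P h) {α : V} {w : V ≃ₗᵢ[ℝ] V}
    (hα : α ∈ simples P) (hw : w ∈ weylGroup Φ) (hmem : α ∉ invSet P w) :
    invSet P (rootReflection α * w) = insert α (rootReflection α '' invSet P w) := by
  have hαP := simples_sub P hα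
  have hαΦ := C.P_sub hαP
  ext β
  constructor
  · intro hβ
    rw [mem_invSet, inv_mul_apply] at hβ
    obtain ⟨hβP, hβneg⟩ := hβ
    by_cases hβα : β = α
    · exact Set.mem_insert_iff.mpr (Or.inl hβα)
    · have hrβP : rootReflection α β ∈ P := C.srefl_pos hα hβP hβα
      exact Set.mem_insert_iff.mpr (Or.inr
        ⟨rootReflection α β, mem_invSet.mpr ⟨hrβP, hβneg⟩, rr_rr α β⟩)
  · intro hβ
    rcases Set.mem_insert_iff.mp hβ with rfl | ⟨γ, hγmem, rfl⟩
    · rw [mem_invSet, inv_mul_apply, rr_self, map_neg, neg_neg]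
      refine ⟨hαP, ?_⟩
      have hnm : ¬(-(w⁻¹ β) ∈ P) := fun hc => hmem (mem_invSet.mpr ⟨hαP, hc⟩)
      exact C.mem_P_of_not_neg (C.winv hw hαΦ) hnm
    · obtain ⟨hγP, hγneg⟩ := mem_invSet.mp hγmem
      have hγα : γ ≠ α := fun he => hmem (he ▸ hγmem)
      rw [mem_invSet, inv_mul_apply, rr_rr]
      exact ⟨C.srefl_pos hα hγP hγα, hγneg⟩

lemma Setup.ncard_mul_of_mem (C : Setup Φ P h) {α : V} {w : V ≃ₗᵢ[ℝ] V}
    (hα : α ∈ simples P) (hw : w ∈ weylGroup Φ) (hmem : α ∈ invSet P w) :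
    (invSet P (rootReflection α * w)).ncard + 1 = (invSet P w).ncard := by
  rw [C.invSet_mul_of_mem hα hw hmem,
    Set.ncard_image_of_injective _ (rootReflection α).injective]
  exact Set.ncard_diff_singleton_add_one hmem (C.invSet_finite w)

lemma Setup.ncard_mul_of_not_mem (C : Setup Φ P h) {α : V} {w : V ≃ₗᵢ[ℝ] V}
    (hα : α ∈ simples P) (hw : w ∈ weylGroup Φ) (hmem : α ∉ invSet P w) :
    (invSet P (rootReflection α * w)).ncard = (invSet P w).ncard + 1 := by
  have hαP := simples_sub P hα
  have hnotin : α ∉ rootReflection α '' invSet P w := by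
    rintro ⟨γ, hγmem, hγe⟩
    have : γ = -α := by
      have := congrArg (rootReflection α) hγe
      rwa [rr_rr, rr_self] at this
    rw [this] at hγmem
    exact C.not_both hαP ((mem_invSet.mp hγmem).1)
  rw [C.invSet_mul_of_not_mem hα hw hmem,
    Set.ncard_insert_of_notMem hnotin ((C.invSet_finite w).image _),
    Set.ncard_image_of_injective _ (rootReflection α).injective]

end FlatAux
namespace FlatAux

variable {Φ P : Set V} {h : V →ₗ[ℝ] ℝ}

/-- Product of the reflections of a word. -/
noncomputable def wprod (l : List V) : V ≃ₗᵢ[ℝ] V := (l.map rootReflection).prod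

lemma wprod_nil : wprod ([] : List V) = 1 := rfl

lemma wprod_cons (a : V) (t : List V) : wprod (a :: t) = rootReflection a * wprod t := by
  rw [wprod, wprod, List.map_cons, List.prod_cons]

lemma wprod_append (l₁ l₂ : List V) : wprod (l₁ ++ l₂) = wprod l₁ * wprod l₂ := by
  rw [wprod, wprod, wprod, List.map_append, List.prod_append]

lemma wprod_reverse (l : List V) : wprod l.reverse = (wprod l)⁻¹ := by
  induction l with
  | nil => rw [List.reverse_nil, wprod_nil, inv_one]
  | cons a t ih =>
    rw [List.reverse_cons, wprod_append, ih, wprod_cons a t, mul_inv_rev, rr_inv]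
    congr 1

lemma rr_mem_weyl {γ : V} (hγ : γ ∈ Φ) : rootReflection γ ∈ weylGroup Φ :=
  Subgroup.subset_closure ⟨γ, hγ, rfl⟩

lemma Setup.wprod_mem (C : Setup Φ P h) {l : List V} (hl : ∀ α ∈ l, IsSimpleRoot P α) :
    wprod l ∈ weylGroup Φ := by
  induction l with
  | nil => rw [wprod_nil]; exact one_mem _
  | cons a t ih =>
    rw [wprod_cons]
    refine mul_mem (rr_mem_weyl (C.P_sub (hl a List.mem_cons_self).1)) ?_
    exact ih fun α hα => hl α (List.mem_cons_of_mem a hα)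

lemma Setup.word_n_le (C : Setup Φ P h) {l : List V} (hl : ∀ α ∈ l, IsSimpleRoot P α) :
    (invSet P (wprod l)).ncard ≤ l.length := by
  induction l with
  | nil => rw [wprod_nil, C.invSet_one]; simp
  | cons a t ih =>
    have ha : a ∈ simples P := hl a List.mem_cons_self
    have hat : ∀ α ∈ t, IsSimpleRoot P α := fun α hα => hl α (List.mem_cons_of_mem a hα)
    have hwt : wprod t ∈ weylGroup Φ := C.wprod_mem hat
    have iht := ih hat
    rw [wprod_cons, List.length_cons]
    by_cases hmem : a ∈ invSet P (wprod t)
    · have := C.ncard_mul_of_mem ha hwt hmem; omega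
    · have := C.ncard_mul_of_not_mem ha hwt hmem; omega

lemma Setup.exchange (C : Setup Φ P h) : ∀ (l : List V), (∀ α ∈ l, IsSimpleRoot P α) →
    ∀ α, α ∈ P → -((wprod l)⁻¹ α) ∈ P →
    ∃ l₁ l₂ β, l = l₁ ++ β :: l₂ ∧
      rootReflection α * wprod l = wprod (l₁ ++ l₂) := by
  intro l
  induction l with
  | nil =>
    intro _ α hαP hneg
    exfalso
    rw [wprod_nil, inv_one] at hneg
    exact C.not_both hαP hneg
  | cons b t ih =>
    intro hl α hαP hneg
    have hb : b ∈ simples P := hl b List.mem_cons_self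
    have hbt : ∀ γ ∈ t, IsSimpleRoot P γ := fun γ hγ => hl γ (List.mem_cons_of_mem b hγ)
    have hA : (wprod (b :: t))⁻¹ α = (wprod t)⁻¹ (rootReflection b α) := by
      rw [wprod_cons, inv_mul_apply]
    by_cases hc : rootReflection b α ∈ P
    · obtain ⟨l₁, l₂, β, hdec, heq⟩ := ih hbt (rootReflection b α) hc (by rw [← hA]; exact hneg)
      refine ⟨b :: l₁, l₂, β, by rw [hdec]; rfl, ?_⟩
      have hconj : rootReflection α * rootReflection b
          = rootReflection b * rootReflection (rootReflection b α) := by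
        rw [rr_conj (rootReflection b) α, rr_inv, ← mul_assoc, ← mul_assoc, rr_sq, one_mul]
      rw [wprod_cons, ← mul_assoc, hconj, mul_assoc, heq, ← wprod_cons]
      rfl
    · have hαb : α = b := by
        by_contra hne
        exact hc (C.srefl_pos hb hαP hne)
      subst hαb
      refine ⟨[], t, α, rfl, ?_⟩
      rw [wprod_cons, ← mul_assoc, rr_sq, one_mul]
      rfl
  
lemma Setup.deletion (C : Setup Φ P h) : ∀ (l : List V), (∀ α ∈ l, IsSimpleRoot P α) →
    (invSet P (wprod l)).ncard < l.length →
    ∃ l' : List V, (∀ α ∈ l', IsSimpleRoot P α) ∧ l'.length + 2 = l.length ∧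
      wprod l' = wprod l := by
  intro l
  induction l with
  | nil => intro _ hlt; simp at hlt
  | cons b t ih =>
    intro hl hlt
    have hb : b ∈ simples P := hl b List.mem_cons_self
    have hbt : ∀ γ ∈ t, IsSimpleRoot P γ := fun γ hγ => hl γ (List.mem_cons_of_mem b hγ)
    have hwt : wprod t ∈ weylGroup Φ := C.wprod_mem hbt
    by_cases hmem : b ∈ invSet P (wprod t)
    · obtain ⟨hbP, hbneg⟩ := mem_invSet.mp hmem
      obtain ⟨l₁, l₂, β, hdec, heq⟩ := C.exchange t hbt b hbP hbneg
      refine ⟨l₁ ++ l₂, ?_, ?_, ?_⟩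
      · intro γ hγ
        apply hbt
        rw [hdec]
        rcases List.mem_append.mp hγ with h1 | h1
        · exact List.mem_append_left _ h1
        · exact List.mem_append_right _ (List.mem_cons_of_mem β h1)
      · have := congrArg List.length hdec
        rw [List.length_append, List.length_cons] at this
        rw [List.length_append, List.length_cons]
        omega
      · rw [← heq, wprod_cons]
    · have hstep := C.ncard_mul_of_not_mem hb hwt hmem
      rw [← wprod_cons] at hstep
      rw [List.length_cons] at hlt
      have hlt' : (invSet P (wprod t)).ncard < t.length := by omega
      obtain ⟨t', ht'S, ht'len, ht'e⟩ := ih hbt hlt'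
      refine ⟨b :: t', ?_, ?_, ?_⟩
      · intro γ hγ
        rcases List.mem_cons.mp hγ with rfl | h1
        · exact hb
        · exact ht'S γ h1
      · rw [List.length_cons, List.length_cons]; omega
      · rw [wprod_cons, ht'e, ← wprod_cons]

lemma Setup.orbit (C : Setup Φ P h) {γ : V} (hγ : γ ∈ P) :
    ∃ l : List V, (∀ α ∈ l, IsSimpleRoot P α) ∧ ∃ β ∈ simples P, γ = wprod l β := by
  classical
  have Pfin : P.Finite := C.rs.finite.subset C.P_sub
  suffices H : ∀ n : ℕ, ∀ γ ∈ P, (Pfin.toFinset.filter (fun β => h β < h γ)).card ≤ n →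
      ∃ l : List V, (∀ α ∈ l, IsSimpleRoot P α) ∧ ∃ β ∈ simples P, γ = wprod l β from
    H _ γ hγ le_rfl
  intro n
  have step : ∀ γ ∈ P, ¬(γ ∈ simples P) →
      ∃ x ∈ simples P, γ ≠ x ∧ rootReflection x γ ∈ P ∧ h (rootReflection x γ) < h γ := by
    intro γ hγP hγs
    obtain ⟨f, hfs, hfn, hfe⟩ := C.exists_expansion hγP
    have hγΦ := C.P_sub hγP
    have hγ0 : γ ≠ 0 := C.rs.ne_zero γ hγΦ
    have hγγ : (0:ℝ) < ⟪γ, γ⟫ := by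
      rw [real_inner_self_eq_norm_sq]
      exact pow_pos (norm_pos_iff.mpr hγ0) 2
    have hsum : ∑ x ∈ f.support, f x * ⟪γ, x⟫ = ⟪γ, γ⟫ := by
      rw [← hfe]
      rw [Finsupp.sum, inner_sum]
      exact Finset.sum_congr rfl fun x _ => by rw [real_inner_smul_right]
    have hex : ∃ x ∈ f.support, 0 < f x * ⟪γ, x⟫ := by
      by_contra hcon
      push_neg at hcon
      have : ∑ x ∈ f.support, f x * ⟪γ, x⟫ ≤ 0 := Finset.sum_nonpos hcon
      rw [hsum] at this
      linarith
    obtain ⟨x, hxsupp, hxpos⟩ := hex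
    have hxS : x ∈ simples P := hfs (Finset.mem_coe.mpr hxsupp)
    have hγx : 0 < ⟪γ, x⟫ := by
      rcases lt_or_ge 0 ⟪γ, x⟫ with h1 | h1
      · exact h1
      · exfalso
        have := hfn x
        nlinarith
    have hne : γ ≠ x := fun he => hγs (he ▸ hxS)
    have hrP : rootReflection x γ ∈ P := C.srefl_pos hxS hγP hne
    refine ⟨x, hxS, hne, hrP, ?_⟩
    rw [rr_apply, map_sub, map_smul, smul_eq_mul]
    have hcx : 0 < coeff x γ := by
      rw [coeff]
      have hx0 : x ≠ 0 := C.rs.ne_zero x (C.P_sub (simples_sub P hxS))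
      have : (0:ℝ) < ⟪x, x⟫ := by
        rw [real_inner_self_eq_norm_sq]; exact pow_pos (norm_pos_iff.mpr hx0) 2
      have hxγ : ⟪x, γ⟫ = ⟪γ, x⟫ := real_inner_comm γ x
      rw [hxγ]
      exact div_pos (by linarith) this
    have hhx : 0 < h x := C.hpos (simples_sub P hxS)
    nlinarith
  induction n with
  | zero =>
    intro γ hγP hcard
    by_cases hγs : γ ∈ simples P
    · refine ⟨[], fun α hα => absurd hα List.not_mem_nil, γ, hγs, ?_⟩
      rw [wprod_nil]; rfl
    · exfalso
      obtain ⟨x, hxS, hne, hrP, hrlt⟩ := step γ hγP hγs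
      have : rootReflection x γ ∈ Pfin.toFinset.filter (fun β => h β < h γ) := by
        rw [Finset.mem_filter, Set.Finite.mem_toFinset]
        exact ⟨hrP, hrlt⟩
      have := Finset.card_pos.mpr ⟨_, this⟩
      omega
  | succ n ih =>
    intro γ hγP hcard
    by_cases hγs : γ ∈ simples P
    · refine ⟨[], fun α hα => absurd hα List.not_mem_nil, γ, hγs, ?_⟩
      rw [wprod_nil]; rfl
    · obtain ⟨x, hxS, hne, hrP, hrlt⟩ := step γ hγP hγs
      set γ' := rootReflection x γ with hγ'd
      have hγ'card : (Pfin.toFinset.filter (fun β => h β < h γ')).card ≤ n := by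
        have hmem : γ' ∈ Pfin.toFinset.filter (fun β => h β < h γ) := by
          rw [Finset.mem_filter, Set.Finite.mem_toFinset]
          exact ⟨hrP, hrlt⟩
        have hsub : Pfin.toFinset.filter (fun β => h β < h γ') ⊆
            (Pfin.toFinset.filter (fun β => h β < h γ)).erase γ' := by
          intro y hy
          rw [Finset.mem_filter] at hy
          rw [Finset.mem_erase, Finset.mem_filter]
          refine ⟨fun hye => ?_, hy.1, by linarith [hy.2]⟩
          · subst hye; exact lt_irrefl _ hy.2
        have := Finset.card_le_card hsub
        rw [Finset.card_erase_of_mem hmem] at this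
        omega
      obtain ⟨l, hlS, β, hβS, hβe⟩ := ih γ' hrP hγ'card
      refine ⟨x :: l, ?_, β, hβS, ?_⟩
      · intro α hα
        rcases List.mem_cons.mp hα with rfl | h1
        · exact hxS
        · exact hlS α h1
      · have : γ = rootReflection x γ' := by rw [hγ'd, rr_rr]
        rw [this, hβe, wprod_cons]
        rfl

lemma Setup.refl_mem_closure (C : Setup Φ P h) {γ : V} (hγΦ : γ ∈ Φ) :
    rootReflection γ ∈ Subgroup.closure {g | ∃ α ∈ simples P, g = rootReflection α} := by
  have key : ∀ δ ∈ P, rootReflection δ ∈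
      Subgroup.closure {g | ∃ α ∈ simples P, g = rootReflection α} := by
    intro δ hδ
    obtain ⟨l, hlS, β, hβS, hβe⟩ := C.orbit hδ
    have hwl : wprod l ∈ Subgroup.closure {g | ∃ α ∈ simples P, g = rootReflection α} := by
      clear hβe
      induction l with
      | nil => rw [wprod_nil]; exact one_mem _
      | cons a t iht =>
        rw [wprod_cons]
        refine mul_mem (Subgroup.subset_closure ⟨a, hlS a List.mem_cons_self, rfl⟩) ?_
        exact iht (fun α hα => hlS α (List.mem_cons_of_mem a hα))
    rw [hβe, rr_conj]
    exact mul_mem (mul_mem hwl (Subgroup.subset_closure ⟨β, hβS, rfl⟩)) (inv_mem hwl)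
  rcases C.dichot hγΦ with h1 | h1
  · exact key γ h1
  · have := key (-γ) h1
    rwa [rr_neg] at this

lemma Setup.weyl_eq (C : Setup Φ P h) :
    weylGroup Φ = Subgroup.closure {g | ∃ α ∈ simples P, g = rootReflection α} := by
  apply le_antisymm
  · rw [weylGroup]
    rw [Subgroup.closure_le]
    rintro g ⟨α, hαΦ, rfl⟩
    exact C.refl_mem_closure hαΦ
  · rw [Subgroup.closure_le]
    rintro g ⟨α, hαS, rfl⟩
    exact rr_mem_weyl (C.P_sub (simples_sub P hαS))

lemma Setup.exists_word (C : Setup Φ P h) {w : V ≃ₗᵢ[ℝ] V} (hw : w ∈ weylGroup Φ) :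
    ∃ l : List V, (∀ α ∈ l, IsSimpleRoot P α) ∧ wprod l = w := by
  rw [C.weyl_eq] at hw
  induction hw using Subgroup.closure_induction with
  | mem g hg =>
    obtain ⟨α, hα, rfl⟩ := hg
    exact ⟨[α], fun β hβ => by rcases List.mem_cons.mp hβ with rfl | h1; exacts [hα, absurd h1 List.not_mem_nil],
      by rw [wprod_cons, wprod_nil, mul_one]⟩
  | one => exact ⟨[], fun α hα => absurd hα List.not_mem_nil, rfl⟩
  | mul a b _ _ ha hb =>
    obtain ⟨la, hlaS, hlae⟩ := ha
    obtain ⟨lb, hlbS, hlbe⟩ := hb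
    refine ⟨la ++ lb, ?_, by rw [wprod_append, hlae, hlbe]⟩
    intro α hα
    rcases List.mem_append.mp hα with h1 | h1
    · exact hlaS α h1
    · exact hlbS α h1
  | inv a _ ha =>
    obtain ⟨la, hlaS, hlae⟩ := ha
    exact ⟨la.reverse, fun α hα => hlaS α (List.mem_reverse.mp hα),
      by rw [wprod_reverse, hlae]⟩

theorem Setup.wlen_eq (C : Setup Φ P h) {w : V ≃ₗᵢ[ℝ] V} (hw : w ∈ weylGroup Φ) :
    wlen P w = (invSet P w).ncard := by
  have hne : {n | ∃ l : List V, (∀ α ∈ l, IsSimpleRoot P α) ∧ l.length = n ∧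
      (l.map rootReflection).prod = w}.Nonempty := by
    obtain ⟨l, hlS, hle⟩ := C.exists_word hw
    exact ⟨l.length, l, hlS, rfl, hle⟩
  have hmem := Nat.sInf_mem hne
  obtain ⟨l, hlS, hlen, hle⟩ := hmem
  have hle' : wprod l = w := hle
  have hge : (invSet P w).ncard ≤ l.length := by
    rw [← hle']
    exact C.word_n_le hlS
  have hwlen : wlen P w = l.length := by rw [wlen, hlen]
  rcases eq_or_lt_of_le hge with h1 | h1
  · rw [hwlen, h1]
  · exfalso
    rw [← hle'] at h1
    obtain ⟨l', hl'S, hl'len, hl'e⟩ := C.deletion l hlS h1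
    have : l'.length ∈ {n | ∃ l : List V, (∀ α ∈ l, IsSimpleRoot P α) ∧ l.length = n ∧
        (l.map rootReflection).prod = w} := ⟨l', hl'S, rfl, by rw [← hle']; exact hl'e⟩
    have hsle := Nat.sInf_le this
    rw [← wlen] at hsle
    rw [hwlen] at hsle
    omega

lemma Setup.wlen_lt_of_mem (C : Setup Φ P h) {α : V} {w : V ≃ₗᵢ[ℝ] V}
    (hα : α ∈ simples P) (hw : w ∈ weylGroup Φ) (hmem : α ∈ invSet P w) :
    wlen P (rootReflection α * w) < wlen P w := by
  have hαW : rootReflection α ∈ weylGroup Φ := rr_mem_weyl (C.P_sub (simples_sub P hα))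
  rw [C.wlen_eq (mul_mem hαW hw), C.wlen_eq hw]
  have := C.ncard_mul_of_mem hα hw hmem
  omega

end FlatAux
namespace FlatAux

variable {Φ P : Set V} {h : V →ₗ[ℝ] ℝ} {J : Set V}

lemma par_le_weyl (hJΦ : J ⊆ Φ) : parabolic J ≤ weylGroup Φ :=
  Subgroup.closure_mono (fun g hg => by
    obtain ⟨α, hα, rfl⟩ := hg
    exact ⟨α, hJΦ hα, rfl⟩)

lemma Setup.par_stab (C : Setup Φ P h) (hJ : J ⊆ simples P) {u : V ≃ₗᵢ[ℝ] V}
    (hu : u ∈ parabolic J) :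
    (∀ x ∈ (Submodule.span ℝ J : Set V), u x ∈ (Submodule.span ℝ J : Set V)) ∧
    (∀ x ∈ (Submodule.span ℝ J : Set V), u⁻¹ x ∈ (Submodule.span ℝ J : Set V)) ∧
    invSet P u ⊆ Φ ∩ (Submodule.span ℝ J : Set V) ∩ P ∧
    invSet P u⁻¹ ⊆ Φ ∩ (Submodule.span ℝ J : Set V) ∩ P := by
  have hJΦ : J ⊆ Φ := fun α hα => C.P_sub (simples_sub P (hJ hα))
  have hu' : u ∈ Subgroup.closure {g | ∃ α ∈ J, g = rootReflection α} := hu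
  clear hu
  induction hu' using Subgroup.closure_induction with
  | mem g hg =>
    obtain ⟨α, hαJ, rfl⟩ := hg
    have hαS : α ∈ simples P := hJ hαJ
    have hαP : α ∈ P := simples_sub P hαS
    have hαΦ : α ∈ Φ := C.P_sub hαP
    have hspan : ∀ x ∈ (Submodule.span ℝ J : Set V),
        rootReflection α x ∈ (Submodule.span ℝ J : Set V) := by
      intro x hx
      rw [rr_apply]
      exact Submodule.sub_mem _ hx (Submodule.smul_mem _ _ (Submodule.subset_span hαJ))
    have hN : invSet P (rootReflection α) ⊆ Φ ∩ (Submodule.span ℝ J : Set V) ∩ P := by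
      intro β hβ
      obtain ⟨hβP, hβneg⟩ := mem_invSet.mp hβ
      rw [rr_inv] at hβneg
      have hβα : β = α := by
        by_contra hne
        exact C.not_both (C.srefl_pos hαS hβP hne) hβneg
      subst hβα
      exact ⟨⟨hαΦ, Submodule.subset_span hαJ⟩, hαP⟩
    refine ⟨hspan, ?_, hN, ?_⟩
    · rw [rr_inv]; exact hspan
    · rw [rr_inv]; exact hN
  | one =>
    refine ⟨fun x hx => hx, fun x hx => by rw [inv_one]; exact hx, ?_, ?_⟩
    · rw [C.invSet_one]; exact Set.empty_subset _
    · rw [inv_one, C.invSet_one]; exact Set.empty_subset _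
  | mul x y hx hy ihx ihy =>
    have hxW : x ∈ weylGroup Φ := par_le_weyl hJΦ hx
    have hyW : y ∈ weylGroup Φ := par_le_weyl hJΦ hy
    obtain ⟨ihx1, ihx2, ihx3, ihx4⟩ := ihx
    obtain ⟨ihy1, ihy2, ihy3, ihy4⟩ := ihy
    refine ⟨fun z hz => ihx1 _ (ihy1 z hz), fun z hz => ?_, ?_, ?_⟩
    · have : (x * y)⁻¹ z = y⁻¹ (x⁻¹ z) := by rw [mul_inv_rev]; rfl
      rw [this]
      exact ihy2 _ (ihx2 z hz)
    · intro β hβ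
      obtain ⟨hβP, hβneg⟩ := mem_invSet.mp hβ
      have hβΦ := C.P_sub hβP
      have hstep : (x * y)⁻¹ β = y⁻¹ (x⁻¹ β) := by rw [mul_inv_rev]; rfl
      rw [hstep] at hβneg
      have hxβΦ : x⁻¹ β ∈ Φ := C.winv hxW hβΦ
      by_cases hc : x⁻¹ β ∈ P
      · have : x⁻¹ β ∈ invSet P y := mem_invSet.mpr ⟨hc, hβneg⟩
        have hmem := ihy3 this
        have : β ∈ (Submodule.span ℝ J : Set V) := by
          have h2 := ihx1 _ hmem.1.2
          rwa [show x (x⁻¹ β) = β from x.apply_symm_apply β] at h2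
        exact ⟨⟨hβΦ, this⟩, hβP⟩
      · have : β ∈ invSet P x :=
          mem_invSet.mpr ⟨hβP, C.neg_P_of_not_mem hxβΦ hc⟩
        exact ihx3 this
    · intro β hβ
      obtain ⟨hβP, hβneg⟩ := mem_invSet.mp hβ
      have hβΦ := C.P_sub hβP
      have hstep : ((x * y)⁻¹)⁻¹ β = x (y β) := by rw [inv_inv]; rfl
      rw [hstep] at hβneg
      have hyβΦ : y β ∈ Φ := C.wmem hyW hβΦ
      by_cases hc : y β ∈ P
      · have : y β ∈ invSet P x⁻¹ := by
          refine mem_invSet.mpr ⟨hc, ?_⟩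
          rw [inv_inv]
          exact hβneg
        have hmem := ihx4 this
        have : β ∈ (Submodule.span ℝ J : Set V) := by
          have h2 := ihy2 _ hmem.1.2
          rwa [show y⁻¹ (y β) = β from y.symm_apply_apply β] at h2
        exact ⟨⟨hβΦ, this⟩, hβP⟩
      · have : β ∈ invSet P y⁻¹ := by
          refine mem_invSet.mpr ⟨hβP, ?_⟩
          rw [inv_inv]
          exact C.neg_P_of_not_mem hyβΦ hc
        exact ihy4 this
  | inv x hx ihx =>
    obtain ⟨ihx1, ihx2, ihx3, ihx4⟩ := ihx
    refine ⟨ihx2, fun z hz => by rw [inv_inv]; exact ihx1 z hz, ihx4, ?_⟩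
    rw [inv_inv]
    exact ihx3

lemma Setup.par_transfer (C : Setup Φ P h) (hJ : J ⊆ simples P) {u : V ≃ₗᵢ[ℝ] V}
    (hu : u ∈ parabolic J) {β : V} (hβP : β ∈ P)
    (hβnJ : β ∉ (Submodule.span ℝ J : Set V)) :
    u β ∈ P ∧ u β ∉ (Submodule.span ℝ J : Set V) := by
  have hJΦ : J ⊆ Φ := fun α hα => C.P_sub (simples_sub P (hJ hα))
  have huW : u ∈ weylGroup Φ := par_le_weyl hJΦ hu
  have hβΦ := C.P_sub hβP
  obtain ⟨h1, h2, h3, h4⟩ := C.par_stab hJ hu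
  constructor
  · by_contra hc
    have huβΦ : u β ∈ Φ := C.wmem huW hβΦ
    have hneg : -(u β) ∈ P := C.neg_P_of_not_mem huβΦ hc
    have : β ∈ invSet P u⁻¹ := by
      refine mem_invSet.mpr ⟨hβP, ?_⟩
      rw [inv_inv]
      exact hneg
    exact hβnJ (h4 this).1.2
  · intro hc
    have := h2 _ hc
    rw [show u⁻¹ (u β) = β from u.symm_apply_apply β] at this
    exact hβnJ this

lemma Setup.PhiJ_exp (C : Setup Φ P h) (hJ : J ⊆ simples P) {β : V}
    (hβ : β ∈ Φ ∩ (Submodule.span ℝ J : Set V) ∩ P) :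
    ∃ f : V →₀ ℝ, ↑f.support ⊆ J ∧ (∀ x, 0 ≤ f x) ∧ (f.sum fun x c => c • x) = β := by
  obtain ⟨c, hcs, hce⟩ := Submodule.mem_span_set.mp hβ.1.2
  obtain ⟨f, hfs, hfn, hfe⟩ := C.exists_expansion hβ.2
  have : f = c := C.exp_unique hfs (subset_trans hcs (fun x hx => hJ hx)) (by rw [hfe, hce])
  subst this
  exact ⟨f, hcs, hfn, hfe⟩

lemma Setup.minRep_iff (C : Setup Φ P h) (hJ : J ⊆ simples P) {v : V ≃ₗᵢ[ℝ] V}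
    (hv : v ∈ weylGroup Φ) :
    (∀ u ∈ parabolic J, wlen P v ≤ wlen P (u * v)) ↔
      (∀ β ∈ Φ ∩ (Submodule.span ℝ J : Set V) ∩ P, v⁻¹ β ∈ P) := by
  have hJΦ : J ⊆ Φ := fun α hα => C.P_sub (simples_sub P (hJ hα))
  constructor
  · intro hmin β hβ
    by_contra hc
    have hβΦ : β ∈ Φ := hβ.1.1
    have hvβΦ : v⁻¹ β ∈ Φ := C.winv hv hβΦ
    have hneg : -(v⁻¹ β) ∈ P := C.neg_P_of_not_mem hvβΦ hc
    obtain ⟨f, hfJ, hfn, hfe⟩ := C.PhiJ_exp hJ hβ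
    have hsum : ∑ x ∈ f.support, f x * h (v⁻¹ x) = h (v⁻¹ β) := by
      rw [← hfe, Finsupp.sum]
      have hlin : v⁻¹ (∑ x ∈ f.support, f x • x) = ∑ x ∈ f.support, f x • v⁻¹ x := by
        show v.symm (∑ x ∈ f.support, f x • x) = ∑ x ∈ f.support, f x • v.symm x
        rw [map_sum]
        exact Finset.sum_congr rfl fun x _ => by rw [map_smul]
      rw [hlin, map_sum]
      exact Finset.sum_congr rfl fun x _ => by rw [map_smul, smul_eq_mul]
    have hlt : h (v⁻¹ β) < 0 := by
      have := C.hpos hneg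
      rw [map_neg] at this
      linarith
    have hex : ∃ x ∈ f.support, f x * h (v⁻¹ x) < 0 := by
      by_contra hcon
      push_neg at hcon
      have : 0 ≤ ∑ x ∈ f.support, f x * h (v⁻¹ x) := Finset.sum_nonneg hcon
      linarith [hsum]
    obtain ⟨x, hxsupp, hxneg⟩ := hex
    have hxJ : x ∈ J := hfJ (Finset.mem_coe.mpr hxsupp)
    have hxS : x ∈ simples P := hJ hxJ
    have hxP := simples_sub P hxS
    have hxΦ := C.P_sub hxP
    have hfx : 0 < f x :=
      lt_of_le_of_ne (hfn x) (Ne.symm (Finsupp.mem_support_iff.mp hxsupp))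
    have hhvx : h (v⁻¹ x) < 0 := by nlinarith
    have hvx : -(v⁻¹ x) ∈ P := by
      refine C.neg_P_of_not_mem (C.winv hv hxΦ) ?_
      intro hp
      have := C.hpos hp
      linarith
    have hxinv : x ∈ invSet P v := mem_invSet.mpr ⟨hxP, hvx⟩
    have hlen := C.wlen_lt_of_mem hxS hv hxinv
    have hsx : rootReflection x ∈ parabolic J := Subgroup.subset_closure ⟨x, hxJ, rfl⟩
    have := hmin _ hsx
    omega
  · intro hA u hu
    have huW : u ∈ weylGroup Φ := par_le_weyl hJΦ hu
    rw [C.wlen_eq hv, C.wlen_eq (mul_mem huW hv)]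
    have hsub : (fun β => u β) '' invSet P v ⊆ invSet P (u * v) := by
      rintro _ ⟨β, hβ, rfl⟩
      obtain ⟨hβP, hβneg⟩ := mem_invSet.mp hβ
      have hβΦ := C.P_sub hβP
      have hβnotJ : β ∉ (Submodule.span ℝ J : Set V) := by
        intro hsp
        exact C.not_both (hA β ⟨⟨hβΦ, hsp⟩, hβP⟩) hβneg
      obtain ⟨huβP, _⟩ := C.par_transfer hJ hu hβP hβnotJ
      refine mem_invSet.mpr ⟨huβP, ?_⟩
      have hstep : (u * v)⁻¹ (u β) = v⁻¹ β := by
        rw [mul_inv_rev]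
        show v⁻¹ (u⁻¹ (u β)) = v⁻¹ β
        rw [show u⁻¹ (u β) = β from u.symm_apply_apply β]
      rw [hstep]
      exact hβneg
    calc (invSet P v).ncard = ((fun β => u β) '' invSet P v).ncard :=
          (Set.ncard_image_of_injective _ u.injective).symm
      _ ≤ (invSet P (u * v)).ncard :=
          Set.ncard_le_ncard hsub (C.invSet_finite _)

lemma Setup.mem_minReps_iff (C : Setup Φ P h) (hJ : J ⊆ simples P) {v : V ≃ₗᵢ[ℝ] V} :
    v ∈ minReps Φ P J ↔ v ∈ weylGroup Φ ∧
      (∀ β ∈ Φ ∩ (Submodule.span ℝ J : Set V) ∩ P, v⁻¹ β ∈ P) := by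
  constructor
  · rintro ⟨h1, h2⟩
    exact ⟨h1, (C.minRep_iff hJ h1).mp h2⟩
  · rintro ⟨h1, h2⟩
    exact ⟨h1, (C.minRep_iff hJ h1).mpr h2⟩

end FlatAux
/-- characterization of the flattening via a parabolic factorization.
Here `Δ = Φ ∩ U` is a root subsystem with `v₁(Δ) = Φ^J`, and `f_Δ(w) = u'` is
expressed by its defining property `I_Δ(u') = I_Φ(w) ∩ Δ`. -/
theorem flattening_eq_iff_factorization
    (Φ P : Set V) (hΦ : IsRootSystem Φ) (hP : IsPositiveSystem Φ P)
    (U : Submodule ℝ V) (J : Set V) (hJ : ∀ α ∈ J, IsSimpleRoot P α)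
    (v₁ : V ≃ₗᵢ[ℝ] V) (hv₁ : v₁ ∈ minReps Φ P J)
    (hconj : ⇑v₁ '' (Φ ∩ (U : Set V)) = Φ ∩ (Submodule.span ℝ J : Set V))
    (u : V ≃ₗᵢ[ℝ] V) (hu : u ∈ parabolic J)
    (w : V ≃ₗᵢ[ℝ] V) (hw : w ∈ weylGroup Φ) :
    invSet (Φ ∩ (U : Set V) ∩ P) (v₁⁻¹ * u * v₁) = invSet P w ∩ (Φ ∩ (U : Set V)) ↔
      ∃ v₂ ∈ minReps Φ P J, w = v₁⁻¹ * u * v₂ := by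
  classical
  obtain ⟨h, hne, hPd⟩ := hP
  have C : FlatAux.Setup Φ P h := ⟨hΦ, hne, hPd⟩
  have hJS : J ⊆ FlatAux.simples P := fun α hα => hJ α hα
  have hJΦ : J ⊆ Φ := fun α hα => C.P_sub ((hJ α hα).1)
  obtain ⟨hv₁W, hv₁min⟩ := hv₁
  have hA₁ : ∀ β ∈ Φ ∩ (Submodule.span ℝ J : Set V) ∩ P, v₁⁻¹ β ∈ P :=
    (C.minRep_iff hJS hv₁W).mp hv₁min
  have huW : u ∈ weylGroup Φ := FlatAux.par_le_weyl hJΦ hu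
  obtain ⟨hu1, hu2, hu3, hu4⟩ := C.par_stab hJS hu
  have hmemD : ∀ α : V, α ∈ Φ ∩ (U : Set V) →
      v₁ α ∈ Φ ∩ (Submodule.span ℝ J : Set V) := by
    intro α hα; rw [← hconj]; exact ⟨α, hα, rfl⟩
  have hmemD' : ∀ α : V, v₁ α ∈ Φ ∩ (Submodule.span ℝ J : Set V) →
      α ∈ Φ ∩ (U : Set V) := by
    intro α hα
    rw [← hconj] at hα
    obtain ⟨δ, hδ, hδe⟩ := hα
    rwa [← v₁.injective hδe]
  have hFJneg : ∀ γ : V, γ ∈ Φ ∩ (Submodule.span ℝ J : Set V) →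
      -γ ∈ Φ ∩ (Submodule.span ℝ J : Set V) := by
    intro γ hγ
    exact ⟨C.neg_mem_Φ hγ.1, Submodule.neg_mem _ hγ.2⟩
  have h3a : ∀ α : V, α ∈ Φ ∩ (U : Set V) → α ∈ P →
      v₁ α ∈ Φ ∩ (Submodule.span ℝ J : Set V) ∩ P := by
    intro α hαΔ hαP
    have h1 := hmemD α hαΔ
    refine ⟨h1, ?_⟩
    by_contra hc
    have hneg : -(v₁ α) ∈ P := C.neg_P_of_not_mem h1.1 hc
    have h2 : -(v₁ α) ∈ Φ ∩ (Submodule.span ℝ J : Set V) ∩ P := ⟨hFJneg _ h1, hneg⟩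
    have h5 := hA₁ _ h2
    have heq : v₁⁻¹ (-(v₁ α)) = -α := by
      rw [map_neg]
      rw [show v₁⁻¹ (v₁ α) = α from v₁.symm_apply_apply α]
    rw [heq] at h5
    exact C.not_both hαP h5
  have h3b : ∀ β : V, β ∈ Φ ∩ (Submodule.span ℝ J : Set V) ∩ P →
      v₁⁻¹ β ∈ Φ ∩ (U : Set V) ∧ v₁⁻¹ β ∈ P := by
    intro β hβ
    have h2 := hA₁ β hβ
    refine ⟨?_, h2⟩
    apply hmemD'
    rw [show v₁ (v₁⁻¹ β) = β from v₁.apply_symm_apply β]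
    exact hβ.1
  have hinvL : ∀ α : V, (v₁⁻¹ * u * v₁)⁻¹ α = v₁⁻¹ (u⁻¹ (v₁ α)) := by
    intro α
    rw [mul_inv_rev, mul_inv_rev, inv_inv]
    rfl
  constructor
  · -- forward: take v₂ := u⁻¹ * v₁ * w
    intro hEq
    refine ⟨u⁻¹ * v₁ * w, ?_, by group⟩
    rw [C.mem_minReps_iff hJS]
    refine ⟨mul_mem (mul_mem (inv_mem huW) hv₁W) hw, ?_⟩
    intro β hβ
    have hinv2 : (u⁻¹ * v₁ * w)⁻¹ β = w⁻¹ (v₁⁻¹ (u β)) := by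
      rw [mul_inv_rev, mul_inv_rev, inv_inv]
      rfl
    rw [hinv2]
    have hγFJ : u β ∈ Φ ∩ (Submodule.span ℝ J : Set V) :=
      ⟨C.wmem huW hβ.1.1, hu1 β hβ.1.2⟩
    set γ := u β with hγd
    by_cases hγP : γ ∈ P
    · -- α := v₁⁻¹ γ is not in the LHS set, hence not in invSet P w
      obtain ⟨hαΔ, hαP⟩ := h3b γ ⟨hγFJ, hγP⟩
      set α := v₁⁻¹ γ with hαd
      have hαnotL : α ∉ invSet (Φ ∩ (U : Set V) ∩ P) (v₁⁻¹ * u * v₁) := by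
        intro hc
        obtain ⟨_, hc2⟩ := FlatAux.mem_invSet.mp hc
        rw [hinvL] at hc2
        rw [show v₁ α = γ from v₁.apply_symm_apply γ] at hc2
        rw [show u⁻¹ γ = β from u.symm_apply_apply β] at hc2
        exact C.not_both (hA₁ β hβ) hc2.2
      rw [hEq] at hαnotL
      have hαnotI : α ∉ invSet P w := fun hc => hαnotL ⟨hc, hαΔ⟩
      have hwαΦ : w⁻¹ α ∈ Φ := C.winv hw (C.P_sub hαP)
      have hnn : ¬(-(w⁻¹ α) ∈ P) := fun hc => hαnotI (FlatAux.mem_invSet.mpr ⟨hαP, hc⟩)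
      exact C.mem_P_of_not_neg hwαΦ hnn
    · -- -γ is positive: -(v₁⁻¹ γ) lies in the LHS set, hence in invSet P w
      have hγΦ : γ ∈ Φ := hγFJ.1
      have hnγP : -γ ∈ P := C.neg_P_of_not_mem hγΦ hγP
      have hnγFJ : -γ ∈ Φ ∩ (Submodule.span ℝ J : Set V) ∩ P := ⟨hFJneg _ hγFJ, hnγP⟩
      obtain ⟨hαΔ, hαP⟩ := h3b (-γ) hnγFJ
      obtain ⟨hβΔ, hβP'⟩ := h3b β hβ
      have hmemL : v₁⁻¹ (-γ) ∈ invSet (Φ ∩ (U : Set V) ∩ P) (v₁⁻¹ * u * v₁) := by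
        refine FlatAux.mem_invSet.mpr ⟨⟨hαΔ, hαP⟩, ?_⟩
        rw [hinvL]
        rw [show v₁ (v₁⁻¹ (-γ)) = -γ from v₁.apply_symm_apply (-γ)]
        have huγ : u⁻¹ (-γ) = -β := by
          rw [map_neg, hγd]
          rw [show u⁻¹ (u β) = β from u.symm_apply_apply β]
        rw [huγ, map_neg, neg_neg]
        exact ⟨hβΔ, hβP'⟩
      rw [hEq] at hmemL
      obtain ⟨hmemI, _⟩ := hmemL
      obtain ⟨_, hc2⟩ := FlatAux.mem_invSet.mp hmemI
      simp only [map_neg, neg_neg] at hc2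
      exact hc2
  · -- backward: the set equality follows from the factorization
    rintro ⟨v₂, hv₂, rfl⟩
    obtain ⟨hv₂W, hA₂⟩ := (C.mem_minReps_iff hJS).mp hv₂
    have hinvR : ∀ α : V, (v₁⁻¹ * u * v₂)⁻¹ α = v₂⁻¹ (u⁻¹ (v₁ α)) := by
      intro α
      rw [mul_inv_rev, mul_inv_rev, inv_inv]
      rfl
    ext α
    rw [Set.mem_inter_iff, FlatAux.mem_invSet, FlatAux.mem_invSet, hinvL, hinvR]
    constructor
    · rintro ⟨⟨hαΔ, hαP⟩, hneg⟩
      obtain ⟨hnΔ, hnP⟩ := hneg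
      have hkey := h3a _ hnΔ hnP
      rw [map_neg] at hkey
      rw [show v₁ (v₁⁻¹ (u⁻¹ (v₁ α))) = u⁻¹ (v₁ α) from
        v₁.apply_symm_apply (u⁻¹ (v₁ α))] at hkey
      have h5 := hA₂ _ hkey
      rw [map_neg] at h5
      exact ⟨⟨hαP, h5⟩, hαΔ⟩
    · rintro ⟨⟨hαP, hneg⟩, hαΔ⟩
      refine ⟨⟨hαΔ, hαP⟩, ?_⟩
      have hγFJ : u⁻¹ (v₁ α) ∈ Φ ∩ (Submodule.span ℝ J : Set V) := by
        have h1 := (h3a α hαΔ hαP).1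
        exact ⟨C.winv huW h1.1, hu2 _ h1.2⟩
      have hγnP : u⁻¹ (v₁ α) ∉ P := by
        intro hc
        have := hA₂ _ ⟨hγFJ, hc⟩
        exact C.not_both this hneg
      have hnγP : -(u⁻¹ (v₁ α)) ∈ P := C.neg_P_of_not_mem hγFJ.1 hγnP
      have hnγFJ : -(u⁻¹ (v₁ α)) ∈ Φ ∩ (Submodule.span ℝ J : Set V) ∩ P :=
        ⟨hFJneg _ hγFJ, hnγP⟩
      obtain ⟨hΔ', hP'⟩ := h3b _ hnγFJ
      rw [map_neg] at hΔ' hP'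
      exact ⟨hΔ', hP'⟩
end

section
/- A permutation w ∈ S_n is fully commutative (i.e., any two reduced words for w are connected by commutations of non-adjacent simple transpositions) if and only if w avoids the pattern 321, i.e., there is no triple i < j < k with w(i) > w(j) > w(k). -/
/-- The product of the word `l` in the adjacent transpositions `s_i = (i, i+1)`
of the symmetric group on `n+1` letters. -/
def wordProd {n : ℕ} (l : List (Fin n)) : Equiv.Perm (Fin (n + 1)) :=
  (l.map fun i => Equiv.swap i.castSucc i.succ).prod

/-- `l` is a reduced word for `w`. -/
def IsReducedWord {n : ℕ} (w : Equiv.Perm (Fin (n + 1))) (l : List (Fin n)) : Prop :=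
  wordProd l = w ∧ ∀ l' : List (Fin n), wordProd l' = w → l.length ≤ l'.length

/-- One application of a commutation `s_i s_j = s_j s_i` with `|i − j| ≥ 2`. -/
def CommStep {n : ℕ} (l l' : List (Fin n)) : Prop :=
  ∃ (a b : List (Fin n)) (i j : Fin n), ((i : ℕ) + 2 ≤ (j : ℕ) ∨ (j : ℕ) + 2 ≤ (i : ℕ)) ∧
    l = a ++ i :: j :: b ∧ l' = a ++ j :: i :: b

/-- `w` is fully commutative: any two reduced words are connected by commutations
of non-adjacent simple transpositions. -/
def FullyCommutative {n : ℕ} (w : Equiv.Perm (Fin (n + 1))) : Prop :=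
  ∀ l l' : List (Fin n), IsReducedWord w l → IsReducedWord w l' →
    Relation.ReflTransGen CommStep l l'

namespace FCProof

open Equiv Equiv.Perm

variable {n : ℕ}

lemma Perm.inv_apply_self {α : Type*} (f : Equiv.Perm α) (x : α) : f⁻¹ (f x) = x :=
  Equiv.Perm.inv_eq_iff_eq.mpr rfl

lemma Perm.apply_inv_self {α : Type*} (f : Equiv.Perm α) (x : α) : f (f⁻¹ x) = x :=
  (Equiv.eq_symm_apply f).mp rfl

/-- The simple transposition. -/
abbrev σ (i : Fin n) : Equiv.Perm (Fin (n + 1)) := Equiv.swap i.castSucc i.succ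

lemma wordProd_nil : wordProd ([] : List (Fin n)) = 1 := rfl

lemma wordProd_cons (i : Fin n) (l : List (Fin n)) :
    wordProd (i :: l) = σ i * wordProd l := by
  simp [wordProd]

lemma sigma_mul_sigma_mul (i : Fin n) (w : Equiv.Perm (Fin (n + 1))) :
    σ i * (σ i * w) = w := by
  rw [← mul_assoc, Equiv.swap_mul_self, one_mul]

lemma swap_val (i : Fin n) (x : Fin (n + 1)) :
    ((σ i x : Fin (n + 1)) : ℕ) =
      if (x : ℕ) = (i : ℕ) then (i : ℕ) + 1
      else if (x : ℕ) = (i : ℕ) + 1 then (i : ℕ) else (x : ℕ) := by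
  rw [Equiv.swap_apply_def, apply_ite (Fin.val), apply_ite (Fin.val)]
  simp only [Fin.coe_castSucc, Fin.val_succ]
  split_ifs with h1 h2 h3 h4 h5 h6 <;>
    simp_all [Fin.ext_iff]

lemma sigma_fix {i : Fin n} {x : Fin (n + 1)} (h1 : (x : ℕ) ≠ (i : ℕ))
    (h2 : (x : ℕ) ≠ (i : ℕ) + 1) : σ i x = x :=
  Equiv.swap_apply_of_ne_of_ne (by simp [Fin.ext_iff, h1]) (by simp [Fin.ext_iff, h2])

/-- The inversion set of a permutation. -/
def invSet (w : Equiv.Perm (Fin (n + 1))) : Finset (Fin (n + 1) × Fin (n + 1)) :=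
  Finset.univ.filter fun p => p.1 < p.2 ∧ w p.2 < w p.1

/-- The inversion number of a permutation. -/
def invNum (w : Equiv.Perm (Fin (n + 1))) : ℕ := (invSet w).card

lemma mem_invSet {w : Equiv.Perm (Fin (n + 1))} {p : Fin (n + 1) × Fin (n + 1)} :
    p ∈ invSet w ↔ p.1 < p.2 ∧ w p.2 < w p.1 := by
  simp [invSet]

lemma invNum_one : invNum (1 : Equiv.Perm (Fin (n + 1))) = 0 := by
  rw [invNum, Finset.card_eq_zero]
  ext ⟨p, q⟩
  simp only [mem_invSet, Finset.notMem_empty, iff_false, not_and, Perm.one_apply]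
  exact fun h h' => absurd h (asymm h')

/-- `i` is a (left) descent of `w` : the value `i+1` occurs before the value `i`. -/
def Descent (i : Fin n) (w : Equiv.Perm (Fin (n + 1))) : Prop :=
  w⁻¹ i.succ < w⁻¹ i.castSucc

lemma swap_lt_iff {i : Fin n} {x y : Fin (n + 1)} (hne : x ≠ y)
    (h1 : ¬((x : ℕ) = (i : ℕ) ∧ (y : ℕ) = (i : ℕ) + 1))
    (h2 : ¬((x : ℕ) = (i : ℕ) + 1 ∧ (y : ℕ) = (i : ℕ))) :
    σ i x < σ i y ↔ x < y := by
  have hx := swap_val i x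
  have hy := swap_val i y
  have hxy : (x : ℕ) ≠ (y : ℕ) := fun h => hne (Fin.ext h)
  rw [Fin.lt_def, Fin.lt_def]
  split_ifs at hx hy <;> omega

lemma mul_swap_lt_iff {i : Fin n} {w : Equiv.Perm (Fin (n + 1))} {p q : Fin (n + 1)}
    (h1 : (p, q) ≠ (w⁻¹ i.castSucc, w⁻¹ i.succ))
    (h2 : (p, q) ≠ (w⁻¹ i.succ, w⁻¹ i.castSucc)) :
    (σ i * w) p < (σ i * w) q ↔ w p < w q := by
  rcases eq_or_ne p q with rfl | hne
  · simp
  · rw [Perm.mul_apply, Perm.mul_apply]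
    refine swap_lt_iff (w.injective.ne hne) ?_ ?_
    · rintro ⟨e1, e2⟩
      apply h1
      have hp : w p = i.castSucc := Fin.ext (by simpa using e1)
      have hq : w q = i.succ := Fin.ext (by simpa using e2)
      rw [Prod.mk.injEq]
      constructor
      · rw [← hp, Perm.inv_apply_self]
      · rw [← hq, Perm.inv_apply_self]
    · rintro ⟨e1, e2⟩
      apply h2
      have hp : w p = i.succ := Fin.ext (by simpa using e1)
      have hq : w q = i.castSucc := Fin.ext (by simpa using e2)
      rw [Prod.mk.injEq]
      constructor
      · rw [← hp, Perm.inv_apply_self]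
      · rw [← hq, Perm.inv_apply_self]

lemma apply_pos_castSucc (w : Equiv.Perm (Fin (n + 1))) (i : Fin n) :
    (σ i * w) (w⁻¹ i.castSucc) = i.succ := by
  rw [Perm.mul_apply, Perm.apply_inv_self, Equiv.swap_apply_left]

lemma apply_pos_succ (w : Equiv.Perm (Fin (n + 1))) (i : Fin n) :
    (σ i * w) (w⁻¹ i.succ) = i.castSucc := by
  rw [Perm.mul_apply, Perm.apply_inv_self, Equiv.swap_apply_right]

lemma pos_ne (w : Equiv.Perm (Fin (n + 1))) (i : Fin n) :
    w⁻¹ i.castSucc ≠ w⁻¹ i.succ := by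
  intro h
  have := w⁻¹.injective h
  simp [Fin.ext_iff] at this

lemma invSet_descent {i : Fin n} {w : Equiv.Perm (Fin (n + 1))} (h : Descent i w) :
    invSet (σ i * w) = (invSet w).erase (w⁻¹ i.succ, w⁻¹ i.castSucc) := by
  ext ⟨p, q⟩
  simp only [mem_invSet, Finset.mem_erase]
  by_cases hpq1 : (p, q) = (w⁻¹ i.succ, w⁻¹ i.castSucc)
  · rw [Prod.mk.injEq] at hpq1
    obtain ⟨rfl, rfl⟩ := hpq1
    rw [apply_pos_castSucc, apply_pos_succ]
    constructor
    · rintro ⟨-, hlt⟩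
      exact absurd hlt (by simp [Fin.lt_def])
    · rintro ⟨hne, -⟩
      exact absurd rfl hne
  · by_cases hpq2 : (p, q) = (w⁻¹ i.castSucc, w⁻¹ i.succ)
    · rw [Prod.mk.injEq] at hpq2
      obtain ⟨rfl, rfl⟩ := hpq2
      have hlt : ¬ (w⁻¹ i.castSucc < w⁻¹ i.succ) := asymm h
      constructor
      · rintro ⟨hh, -⟩; exact absurd hh hlt
      · rintro ⟨-, hh, -⟩; exact absurd hh hlt
    · rw [mul_swap_lt_iff (by simpa [Prod.ext_iff, and_comm, eq_comm] using hpq1)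
        (by simpa [Prod.ext_iff, and_comm, eq_comm] using hpq2)]
      constructor
      · rintro ⟨h1, h2⟩; exact ⟨hpq1, h1, h2⟩
      · rintro ⟨-, h1, h2⟩; exact ⟨h1, h2⟩

lemma invSet_ascent {i : Fin n} {w : Equiv.Perm (Fin (n + 1))} (h : ¬ Descent i w) :
    invSet (σ i * w) = insert (w⁻¹ i.castSucc, w⁻¹ i.succ) (invSet w) := by
  have hlt : w⁻¹ i.castSucc < w⁻¹ i.succ :=
    lt_of_le_of_ne (not_lt.mp h) (pos_ne w i)
  ext ⟨p, q⟩
  simp only [mem_invSet, Finset.mem_insert]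
  by_cases hpq1 : (p, q) = (w⁻¹ i.castSucc, w⁻¹ i.succ)
  · rw [Prod.mk.injEq] at hpq1
    obtain ⟨rfl, rfl⟩ := hpq1
    rw [apply_pos_castSucc, apply_pos_succ]
    constructor
    · intro _; exact Or.inl rfl
    · intro _
      exact ⟨hlt, by simp [Fin.lt_def]⟩
  · by_cases hpq2 : (p, q) = (w⁻¹ i.succ, w⁻¹ i.castSucc)
    · rw [Prod.mk.injEq] at hpq2
      obtain ⟨rfl, rfl⟩ := hpq2
      have hnlt : ¬ (w⁻¹ i.succ < w⁻¹ i.castSucc) := asymm hlt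
      rw [apply_pos_castSucc, apply_pos_succ]
      constructor
      · rintro ⟨hh, -⟩; exact absurd hh hnlt
      · rintro (hh | ⟨hh, -⟩)
        · rw [Prod.mk.injEq] at hh
          exact absurd hh.1.symm (pos_ne w i)
        · exact absurd hh hnlt
    · rw [mul_swap_lt_iff (by simpa [Prod.ext_iff, and_comm, eq_comm] using hpq2)
        (by simpa [Prod.ext_iff, and_comm, eq_comm] using hpq1)]
      constructor
      · rintro ⟨h1, h2⟩; exact Or.inr ⟨h1, h2⟩
      · rintro (hh | ⟨h1, h2⟩)
        · exact absurd hh hpq1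
        · exact ⟨h1, h2⟩

lemma invNum_descent {i : Fin n} {w : Equiv.Perm (Fin (n + 1))} (h : Descent i w) :
    invNum (σ i * w) + 1 = invNum w := by
  have hmem : (w⁻¹ i.succ, w⁻¹ i.castSucc) ∈ invSet w := by
    rw [mem_invSet]
    refine ⟨h, ?_⟩
    simp only [Perm.apply_inv_self]
    simp [Fin.lt_def]
  rw [invNum, invNum, invSet_descent h, Finset.card_erase_of_mem hmem]
  have : 0 < (invSet w).card := Finset.card_pos.2 ⟨_, hmem⟩
  omega

lemma invNum_ascent {i : Fin n} {w : Equiv.Perm (Fin (n + 1))} (h : ¬ Descent i w) :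
    invNum (σ i * w) = invNum w + 1 := by
  have hmem : (w⁻¹ i.castSucc, w⁻¹ i.succ) ∉ invSet w := by
    rw [mem_invSet]
    simp only [Perm.apply_inv_self]
    rintro ⟨-, hh⟩
    exact absurd hh (by simp [Fin.lt_def])
  rw [invNum, invNum, invSet_ascent h, Finset.card_insert_of_notMem hmem]

lemma invNum_le_length (l : List (Fin n)) : invNum (wordProd l) ≤ l.length := by
  induction l with
  | nil => simp [wordProd_nil, invNum_one]
  | cons i t ih =>
    rw [wordProd_cons]
    by_cases h : Descent i (wordProd t)
    · have := invNum_descent h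
      simp only [List.length_cons]
      omega
    · have := invNum_ascent h
      simp only [List.length_cons]
      omega

lemma eq_one_of_forall_not_descent {w : Equiv.Perm (Fin (n + 1))}
    (h : ∀ i : Fin n, ¬ Descent i w) : w = 1 := by
  have hs : StrictMono (fun v => w⁻¹ v) := by
    rw [Fin.strictMono_iff_lt_succ]
    intro i
    rcases lt_trichotomy (w⁻¹ i.castSucc) (w⁻¹ i.succ) with h' | h' | h'
    · exact h'
    · exact absurd h' (pos_ne w i)
    · exact absurd h' (h i)
  have : ∀ v, w⁻¹ v = v := by
    intro v
    have := Fin.coe_orderIso_apply (StrictMono.orderIsoOfSurjective _ hs w⁻¹.surjective) v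
    exact Fin.ext this
  have hinv : w⁻¹ = 1 := Equiv.ext this
  calc w = (w⁻¹)⁻¹ := (inv_inv w).symm
  _ = 1 := by rw [hinv]; rfl

lemma exists_word : ∀ N : ℕ, ∀ w : Equiv.Perm (Fin (n + 1)), invNum w ≤ N →
    ∃ l : List (Fin n), wordProd l = w ∧ l.length = invNum w := by
  intro N
  induction N with
  | zero =>
    intro w hw
    have h0 : invNum w = 0 := Nat.le_zero.mp hw
    have hw1 : w = 1 := by
      apply eq_one_of_forall_not_descent
      intro i hd
      have := invNum_descent hd
      omega
    exact ⟨[], by rw [wordProd_nil, hw1], by simp [h0]⟩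
  | succ N ih =>
    intro w hw
    by_cases hall : ∀ i : Fin n, ¬ Descent i w
    · have hw1 := eq_one_of_forall_not_descent hall
      refine ⟨[], by rw [wordProd_nil, hw1], ?_⟩
      rw [hw1, invNum_one]
      rfl
    · push_neg at hall
      obtain ⟨i, hi⟩ := hall
      have hd := invNum_descent hi
      obtain ⟨l, hl, hlen⟩ := ih (σ i * w) (by omega)
      refine ⟨i :: l, ?_, ?_⟩
      · rw [wordProd_cons, hl, sigma_mul_sigma_mul]
      · simp only [List.length_cons]
        omega

lemma isReducedWord_iff {w : Equiv.Perm (Fin (n + 1))} {l : List (Fin n)} :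
    IsReducedWord w l ↔ wordProd l = w ∧ l.length = invNum w := by
  constructor
  · rintro ⟨hp, hmin⟩
    refine ⟨hp, le_antisymm ?_ ?_⟩
    · obtain ⟨m, hm, hlen⟩ := exists_word (invNum w) w le_rfl
      exact (hmin m hm).trans hlen.le
    · rw [← hp]; exact invNum_le_length l
  · rintro ⟨hp, hl⟩
    refine ⟨hp, fun l' h' => ?_⟩
    rw [hl, ← h']
    exact invNum_le_length l'

lemma reduced_cons {w : Equiv.Perm (Fin (n + 1))} {i : Fin n} {t : List (Fin n)}
    (h : IsReducedWord w (i :: t)) :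
    Descent i w ∧ IsReducedWord (σ i * w) t := by
  obtain ⟨hp, hlen⟩ := isReducedWord_iff.mp h
  rw [wordProd_cons] at hp
  have hpt : wordProd t = σ i * w := by
    rw [← hp, sigma_mul_sigma_mul]
  simp only [List.length_cons] at hlen
  have hle : invNum (σ i * w) ≤ t.length := by
    rw [← hpt]; exact invNum_le_length t
  have hd : Descent i w := by
    by_contra hnd
    have := invNum_ascent hnd
    omega
  have := invNum_descent hd
  exact ⟨hd, isReducedWord_iff.mpr ⟨hpt, by omega⟩⟩

lemma reduced_cons_of {w : Equiv.Perm (Fin (n + 1))} {i : Fin n} {t : List (Fin n)}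
    (hd : Descent i w) (h : IsReducedWord (σ i * w) t) :
    IsReducedWord w (i :: t) := by
  obtain ⟨hp, hlen⟩ := isReducedWord_iff.mp h
  refine isReducedWord_iff.mpr ⟨?_, ?_⟩
  · rw [wordProd_cons, hp, sigma_mul_sigma_mul]
  · have := invNum_descent hd
    simp only [List.length_cons]
    omega

lemma descent_of_sigma_far {i j : Fin n} {w : Equiv.Perm (Fin (n + 1))}
    (hfar : (i : ℕ) + 2 ≤ (j : ℕ) ∨ (j : ℕ) + 2 ≤ (i : ℕ))
    (hd : Descent j w) : Descent j (σ i * w) := by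
  have h1 : σ i j.castSucc = j.castSucc := by
    apply sigma_fix <;> simp only [Fin.coe_castSucc] <;> omega
  have h2 : σ i j.succ = j.succ := by
    apply sigma_fix <;> simp only [Fin.val_succ] <;> omega
  unfold Descent at *
  rw [mul_inv_rev, Equiv.swap_inv, Perm.mul_apply, Perm.mul_apply, h1, h2]
  exact hd

lemma swap_commute {i j : Fin n}
    (hfar : (i : ℕ) + 2 ≤ (j : ℕ) ∨ (j : ℕ) + 2 ≤ (i : ℕ)) :
    σ i * σ j = σ j * σ i := by
  have a1 : σ i j.castSucc = j.castSucc :=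
    sigma_fix (by simp only [Fin.coe_castSucc]; omega) (by simp only [Fin.coe_castSucc]; omega)
  have a2 : σ i j.succ = j.succ :=
    sigma_fix (by simp only [Fin.val_succ]; omega) (by simp only [Fin.val_succ]; omega)
  have key : σ i * σ j * (σ i)⁻¹ = σ j := by
    rw [← Equiv.swap_apply_apply, a1, a2]
  calc σ i * σ j = σ i * σ j * (σ i)⁻¹ * σ i := by rw [inv_mul_cancel_right]
  _ = σ j * σ i := by rw [key]

lemma braid {i j : Fin n} (h : (j : ℕ) = (i : ℕ) + 1) :
    σ i * σ j * σ i = σ j * σ i * σ j := by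
  have hjn := j.isLt
  have a1 : σ i j.castSucc = i.castSucc := by
    have hjc : j.castSucc = i.succ := Fin.ext (by simp [h])
    rw [hjc, Equiv.swap_apply_right]
  have a2 : σ i j.succ = j.succ :=
    sigma_fix (by simp only [Fin.val_succ]; omega) (by simp only [Fin.val_succ]; omega)
  have a3 : σ j i.castSucc = i.castSucc :=
    sigma_fix (by simp only [Fin.coe_castSucc]; omega) (by simp only [Fin.coe_castSucc]; omega)
  have a4 : σ j i.succ = j.succ := by
    have hic : i.succ = j.castSucc := Fin.ext (by simp [h])
    rw [hic, Equiv.swap_apply_left]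
  calc σ i * σ j * σ i = σ i * σ j * (σ i)⁻¹ := by rw [Equiv.swap_inv]
  _ = Equiv.swap (σ i j.castSucc) (σ i j.succ) := (Equiv.swap_apply_apply _ _ _).symm
  _ = Equiv.swap i.castSucc j.succ := by rw [a1, a2]
  _ = Equiv.swap (σ j i.castSucc) (σ j i.succ) := by rw [a3, a4]
  _ = σ j * σ i * (σ j)⁻¹ := Equiv.swap_apply_apply _ _ _
  _ = σ j * σ i * σ j := by rw [Equiv.swap_inv]

lemma commStep_perm {l l' : List (Fin n)} (h : CommStep l l') : l.Perm l' := by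
  obtain ⟨a, b, i, j, -, rfl, rfl⟩ := h
  exact List.Perm.append_left a (List.Perm.swap j i b)

lemma rtg_perm {l l' : List (Fin n)} (h : Relation.ReflTransGen CommStep l l') :
    l.Perm l' := by
  induction h with
  | refl => exact List.Perm.refl _
  | tail _ hstep ih => exact ih.trans (commStep_perm hstep)

lemma commStep_cons (i : Fin n) {l l' : List (Fin n)} (h : CommStep l l') :
    CommStep (i :: l) (i :: l') := by
  obtain ⟨a, b, x, y, hxy, rfl, rfl⟩ := h
  exact ⟨i :: a, b, x, y, hxy, rfl, rfl⟩

lemma rtg_cons (i : Fin n) {l l' : List (Fin n)}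
    (h : Relation.ReflTransGen CommStep l l') :
    Relation.ReflTransGen CommStep (i :: l) (i :: l') :=
  Relation.ReflTransGen.lift (List.cons i) (fun _ _ hs => commStep_cons i hs) _ _ h

lemma commStep_symm {l l' : List (Fin n)} (h : CommStep l l') : CommStep l' l := by
  obtain ⟨a, b, x, y, hxy, rfl, rfl⟩ := h
  exact ⟨a, b, y, x, hxy.symm, rfl, rfl⟩

lemma rtg_symm {l l' : List (Fin n)} (h : Relation.ReflTransGen CommStep l l') :
    Relation.ReflTransGen CommStep l' l :=
  @Std.Symm.symm _ _ (@Relation.ReflTransGen.stdSymm _ CommStep ⟨fun _ _ => commStep_symm⟩) _ _ h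

/-- Avoiding the pattern 321. -/
def Avoids (w : Equiv.Perm (Fin (n + 1))) : Prop :=
  ¬ ∃ i j k : Fin (n + 1), i < j ∧ j < k ∧ w k < w j ∧ w j < w i

lemma avoids_of_descent {i : Fin n} {w : Equiv.Perm (Fin (n + 1))}
    (hd : Descent i w) (ha : Avoids w) : Avoids (σ i * w) := by
  rintro ⟨p, q, r, hpq, hqr, h1, h2⟩
  apply ha
  refine ⟨p, q, r, hpq, hqr, ?_, ?_⟩
  rotate_left
  all_goals {
    have hne1 : ((w p : Fin (n+1)) : ℕ) ≠ ((w q : Fin (n+1)) : ℕ) :=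
      fun hh => absurd (w.injective (Fin.ext hh)) hpq.ne
    have hne2 : ((w q : Fin (n+1)) : ℕ) ≠ ((w r : Fin (n+1)) : ℕ) :=
      fun hh => absurd (w.injective (Fin.ext hh)) hqr.ne
    have hne3 : ((w p : Fin (n+1)) : ℕ) ≠ ((w r : Fin (n+1)) : ℕ) :=
      fun hh => absurd (w.injective (Fin.ext hh)) (hpq.trans hqr).ne
    have hex1 : ¬(((w p : Fin (n+1)) : ℕ) = (i : ℕ) ∧ ((w q : Fin (n+1)) : ℕ) = (i : ℕ) + 1) := by
      rintro ⟨e1, e2⟩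
      have hp' : p = w⁻¹ i.castSucc := by
        rw [← Perm.inv_apply_self w p]
        congr 1
        exact Fin.ext (by simpa using e1)
      have hq' : q = w⁻¹ i.succ := by
        rw [← Perm.inv_apply_self w q]
        congr 1
        exact Fin.ext (by simpa using e2)
      rw [hp', hq'] at hpq
      exact absurd (hd.trans hpq) (lt_irrefl _)
    have hex2 : ¬(((w q : Fin (n+1)) : ℕ) = (i : ℕ) ∧ ((w r : Fin (n+1)) : ℕ) = (i : ℕ) + 1) := by
      rintro ⟨e1, e2⟩
      have hq' : q = w⁻¹ i.castSucc := by
        rw [← Perm.inv_apply_self w q]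
        congr 1
        exact Fin.ext (by simpa using e1)
      have hr' : r = w⁻¹ i.succ := by
        rw [← Perm.inv_apply_self w r]
        congr 1
        exact Fin.ext (by simpa using e2)
      rw [hq', hr'] at hqr
      exact absurd (hd.trans hqr) (lt_irrefl _)
    rw [Perm.mul_apply, Perm.mul_apply] at h1 h2
    rw [Fin.lt_def] at h1 h2 ⊢
    have s1 := swap_val i (w p)
    have s2 := swap_val i (w q)
    have s3 := swap_val i (w r)
    have hb1 := (w p).isLt
    have hb2 := (w q).isLt
    have hb3 := (w r).isLt
    split_ifs at s1 s2 s3 <;> omega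
  }

lemma exists_descent_between {w : Equiv.Perm (Fin (n + 1))} {x y : Fin (n + 1)}
    (hxy : (y : ℕ) < (x : ℕ)) (hpos : w⁻¹ x < w⁻¹ y) :
    ∃ v : Fin n, (y : ℕ) ≤ (v : ℕ) ∧ (v : ℕ) < (x : ℕ) ∧ Descent v w := by
  by_contra hc
  push_neg at hc
  have hxle : (x : ℕ) ≤ n := Nat.lt_succ_iff.mp x.isLt
  have key : ∀ d : ℕ, (hd : (y : ℕ) + d ≤ (x : ℕ)) →
      w⁻¹ y ≤ w⁻¹ ⟨(y : ℕ) + d, by omega⟩ := by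
    intro d
    induction d with
    | zero =>
      intro hd
      have : (⟨(y : ℕ) + 0, by omega⟩ : Fin (n + 1)) = y := Fin.ext (by simp)
      rw [this]
    | succ d ihd =>
      intro hd
      have hd' : (y : ℕ) + d ≤ (x : ℕ) := by omega
      have hvlt : (y : ℕ) + d < n := by omega
      set v : Fin n := ⟨(y : ℕ) + d, hvlt⟩ with hv
      have hnd : ¬ Descent v w := hc v (by simp [hv]) (by simp [hv]; omega)
      have hcs : v.castSucc = (⟨(y : ℕ) + d, by omega⟩ : Fin (n + 1)) := Fin.ext rfl
      have hsc : v.succ = (⟨(y : ℕ) + (d + 1), by omega⟩ : Fin (n + 1)) :=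
        Fin.ext (by simp [hv]; omega)
      have hlt : w⁻¹ v.castSucc < w⁻¹ v.succ :=
        lt_of_le_of_ne (not_lt.mp hnd) (pos_ne w v)
      calc w⁻¹ y ≤ w⁻¹ ⟨(y : ℕ) + d, by omega⟩ := ihd hd'
      _ ≤ w⁻¹ ⟨(y : ℕ) + (d + 1), by omega⟩ := le_of_lt (by rw [← hcs, ← hsc]; exact hlt)
  have h2 := key ((x : ℕ) - (y : ℕ)) (by omega)
  have hx' : (⟨(y : ℕ) + ((x : ℕ) - (y : ℕ)), by omega⟩ : Fin (n + 1)) = x :=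
    Fin.ext (by simp; omega)
  rw [hx'] at h2
  exact absurd (lt_of_lt_of_le hpos h2) (lt_irrefl _)


lemma inv_sigma_mul (i : Fin n) (w : Equiv.Perm (Fin (n + 1))) (u : Fin (n + 1)) :
    (σ i * w)⁻¹ u = w⁻¹ (σ i u) := by
  rw [mul_inv_rev, Equiv.swap_inv, Perm.mul_apply]

lemma descent_def {i : Fin n} {w : Equiv.Perm (Fin (n + 1))} :
    Descent i w ↔ w⁻¹ i.succ < w⁻¹ i.castSucc := Iff.rfl

/-- Step lemma 1: the pattern persists after removing a descent chosen between `y` and `x`. -/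
lemma pattern_step_high {w : Equiv.Perm (Fin (n + 1))} {v : Fin n} {x y z : Fin (n + 1)}
    (hd : Descent v w)
    (hzy : (z : ℕ) < (y : ℕ)) (hyx1 : (y : ℕ) + 1 < (x : ℕ))
    (h3 : w⁻¹ x < w⁻¹ y) (h4 : w⁻¹ y < w⁻¹ z)
    (hyv : (y : ℕ) ≤ (v : ℕ)) (hvx : (v : ℕ) < (x : ℕ)) :
    ∃ x' y' z' : Fin (n + 1), (z' : ℕ) < (y' : ℕ) ∧ (y' : ℕ) < (x' : ℕ) ∧
      (σ v * w)⁻¹ x' < (σ v * w)⁻¹ y' ∧ (σ v * w)⁻¹ y' < (σ v * w)⁻¹ z' := by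
  have hfixz : σ v z = z := sigma_fix (by omega) (by omega)
  by_cases hx1 : (x : ℕ) = (v : ℕ) + 1
  · -- x is moved down to v; note y < v in this case
    have hyv' : (y : ℕ) < (v : ℕ) := by omega
    refine ⟨v.castSucc, y, z, hzy, by simp only [Fin.coe_castSucc]; omega, ?_, ?_⟩
    · rw [inv_sigma_mul, inv_sigma_mul, Equiv.swap_apply_left]
      have hvs : v.succ = x := Fin.ext (by simp only [Fin.val_succ]; omega)
      rw [hvs, sigma_fix (by omega) (by omega)]
      exact h3
    · rw [inv_sigma_mul, inv_sigma_mul, sigma_fix (by omega) (by omega), hfixz]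
      exact h4
  · by_cases hy1 : (y : ℕ) = (v : ℕ)
    · refine ⟨x, v.succ, z, by simp only [Fin.val_succ]; omega,
        by simp only [Fin.val_succ]; omega, ?_, ?_⟩
      · rw [inv_sigma_mul, inv_sigma_mul, Equiv.swap_apply_right,
          sigma_fix (by omega) (by omega)]
        have hvc : v.castSucc = y := Fin.ext (by simp only [Fin.coe_castSucc]; omega)
        rw [hvc]
        exact h3
      · rw [inv_sigma_mul, inv_sigma_mul, Equiv.swap_apply_right, hfixz]
        have hvc : v.castSucc = y := Fin.ext (by simp only [Fin.coe_castSucc]; omega)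
        rw [hvc]
        exact h4
    · refine ⟨x, y, z, hzy, by omega, ?_, ?_⟩
      · rw [inv_sigma_mul, inv_sigma_mul, sigma_fix (by omega) (by omega),
          sigma_fix (by omega) (by omega)]
        exact h3
      · rw [inv_sigma_mul, inv_sigma_mul, sigma_fix (by omega) (by omega), hfixz]
        exact h4

/-- Step lemma 2: the pattern persists after removing a descent chosen between `z` and `y`. -/
lemma pattern_step_low {w : Equiv.Perm (Fin (n + 1))} {u : Fin n} {x y z : Fin (n + 1)}
    (hd : Descent u w)
    (hzy1 : (z : ℕ) + 1 < (y : ℕ)) (hyx : (y : ℕ) < (x : ℕ))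
    (h3 : w⁻¹ x < w⁻¹ y) (h4 : w⁻¹ y < w⁻¹ z)
    (hzu : (z : ℕ) ≤ (u : ℕ)) (huy : (u : ℕ) < (y : ℕ)) :
    ∃ x' y' z' : Fin (n + 1), (z' : ℕ) < (y' : ℕ) ∧ (y' : ℕ) < (x' : ℕ) ∧
      (σ u * w)⁻¹ x' < (σ u * w)⁻¹ y' ∧ (σ u * w)⁻¹ y' < (σ u * w)⁻¹ z' := by
  have hfixx : σ u x = x := sigma_fix (by omega) (by omega)
  by_cases hy1 : (y : ℕ) = (u : ℕ) + 1
  · -- y is moved down to u; note z < u in this case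
    have hzu' : (z : ℕ) < (u : ℕ) := by omega
    refine ⟨x, u.castSucc, z, by simp only [Fin.coe_castSucc]; omega,
      by simp only [Fin.coe_castSucc]; omega, ?_, ?_⟩
    · rw [inv_sigma_mul, inv_sigma_mul, hfixx, Equiv.swap_apply_left]
      have hus : u.succ = y := Fin.ext (by simp only [Fin.val_succ]; omega)
      rw [hus]
      exact h3
    · rw [inv_sigma_mul, inv_sigma_mul, Equiv.swap_apply_left,
        sigma_fix (by omega) (by omega)]
      have hus : u.succ = y := Fin.ext (by simp only [Fin.val_succ]; omega)
      rw [hus]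
      exact h4
  · by_cases hz1 : (z : ℕ) = (u : ℕ)
    · refine ⟨x, y, u.succ, by simp only [Fin.val_succ]; omega, hyx, ?_, ?_⟩
      · rw [inv_sigma_mul, inv_sigma_mul, hfixx,
          sigma_fix (by omega) (by omega)]
        exact h3
      · rw [inv_sigma_mul, inv_sigma_mul, Equiv.swap_apply_right,
          sigma_fix (by omega) (by omega)]
        have huc : u.castSucc = z := Fin.ext (by simp only [Fin.coe_castSucc]; omega)
        rw [huc]
        exact h4
    · refine ⟨x, y, z, by omega, hyx, ?_, ?_⟩
      · rw [inv_sigma_mul, inv_sigma_mul, hfixx,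
          sigma_fix (by omega) (by omega)]
        exact h3
      · rw [inv_sigma_mul, inv_sigma_mul, sigma_fix (by omega) (by omega),
          sigma_fix (by omega) (by omega)]
        exact h4

/-- If `w` contains the pattern 321 (in value form), there are two reduced words for `w`
which are not permutations of each other. -/
lemma exists_bad_words : ∀ N : ℕ, ∀ w : Equiv.Perm (Fin (n + 1)), invNum w ≤ N →
    (∃ x y z : Fin (n + 1), (z : ℕ) < (y : ℕ) ∧ (y : ℕ) < (x : ℕ) ∧
      w⁻¹ x < w⁻¹ y ∧ w⁻¹ y < w⁻¹ z) →
    ∃ l1 l2 : List (Fin n), IsReducedWord w l1 ∧ IsReducedWord w l2 ∧ ¬ l1.Perm l2 := by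
  intro N
  induction N with
  | zero =>
    intro w hw hpat
    obtain ⟨x, y, z, hzy, hyx, h3, h4⟩ := hpat
    obtain ⟨v, -, -, hd⟩ := exists_descent_between hyx h3
    have := invNum_descent hd
    omega
  | succ N ih =>
    intro w hw hpat
    obtain ⟨x, y, z, hzy, hyx, h3, h4⟩ := hpat
    by_cases hbase : (x : ℕ) = (z : ℕ) + 2
    · -- the three values are consecutive : construct two braid-related reduced words
      have hzyv : (y : ℕ) = (z : ℕ) + 1 := by omega
      have hxn := x.isLt
      have hzn : (z : ℕ) < n := by omega
      have hzn1 : (z : ℕ) + 1 < n := by omega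
      set iz : Fin n := ⟨(z : ℕ), hzn⟩ with hiz
      set jz : Fin n := ⟨(z : ℕ) + 1, hzn1⟩ with hjz
      have viz : (iz : ℕ) = (z : ℕ) := rfl
      have vjz : (jz : ℕ) = (z : ℕ) + 1 := rfl
      have eic : iz.castSucc = z := Fin.ext rfl
      have eis : iz.succ = y := Fin.ext (by simp only [Fin.val_succ]; omega)
      have ejc : jz.castSucc = y := Fin.ext (by simp only [Fin.coe_castSucc]; omega)
      have ejs : jz.succ = x := Fin.ext (by simp only [Fin.val_succ]; omega)
      have hfixx : σ iz x = x :=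
        sigma_fix (by omega) (by omega)
      have d1 : Descent iz w := by
        rw [descent_def, eic, eis]; exact h4
      have d2 : Descent jz (σ iz * w) := by
        rw [descent_def, inv_sigma_mul, inv_sigma_mul, ejs, ejc, ← eis,
          Equiv.swap_apply_right, eic, hfixx]
        exact h3.trans h4
      have d3 : Descent iz (σ jz * (σ iz * w)) := by
        rw [descent_def, inv_sigma_mul, inv_sigma_mul, inv_sigma_mul, inv_sigma_mul]
        rw [show iz.succ = jz.castSucc from Fin.ext rfl]
        rw [Equiv.swap_apply_left, ejs, hfixx]
        rw [show σ jz iz.castSucc = iz.castSucc from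
          sigma_fix (by simp only [Fin.coe_castSucc]; omega)
            (by simp only [Fin.coe_castSucc]; omega)]
        rw [eic, show σ iz z = y from by rw [← eic, Equiv.swap_apply_left, eis]]
        exact h3
      have n1 := invNum_descent d1
      have n2 := invNum_descent d2
      have n3 := invNum_descent d3
      obtain ⟨m, hm1, hm2⟩ := exists_word (invNum (σ iz * (σ jz * (σ iz * w))))
        (σ iz * (σ jz * (σ iz * w))) le_rfl
      have hm : IsReducedWord (σ iz * (σ jz * (σ iz * w))) m :=
        isReducedWord_iff.mpr ⟨hm1, hm2⟩
      have r3 : IsReducedWord (σ jz * (σ iz * w)) (iz :: m) := reduced_cons_of d3 hm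
      have r2 : IsReducedWord (σ iz * w) (jz :: iz :: m) := reduced_cons_of d2 r3
      have r1 : IsReducedWord w (iz :: jz :: iz :: m) := reduced_cons_of d1 r2
      have hb : σ iz * σ jz * σ iz = σ jz * σ iz * σ jz := braid (by omega)
      have hw3 : σ iz * (σ jz * (σ iz * (σ iz * (σ jz * (σ iz * w))))) = w := by
        simp only [sigma_mul_sigma_mul]
      have rL2 : IsReducedWord w (jz :: iz :: jz :: m) := by
        rw [isReducedWord_iff]
        constructor
        · rw [wordProd_cons, wordProd_cons, wordProd_cons, hm1]
          rw [← mul_assoc, ← mul_assoc, ← hb, mul_assoc, mul_assoc]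
          exact hw3
        · have := (isReducedWord_iff.mp r1).2
          simpa using this
      refine ⟨iz :: jz :: iz :: m, jz :: iz :: jz :: m, r1, rL2, fun hperm => ?_⟩
      have hcount := hperm.count_eq iz
      have hne : jz ≠ iz := Fin.ne_of_val_ne (by omega)
      have e1 : (iz :: jz :: iz :: m).count iz = m.count iz + 2 := by
        simp [List.count_cons, hne, Ne.symm hne] <;> omega
      have e2 : (jz :: iz :: jz :: m).count iz = m.count iz + 1 := by
        simp [List.count_cons, hne, Ne.symm hne] <;> omega
      rw [e1, e2] at hcount
      omega
    · -- non-consecutive pattern : push the pattern down past one descent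
      by_cases hcase : (y : ℕ) + 1 < (x : ℕ)
      · obtain ⟨v, hyv, hvx, hd⟩ := exists_descent_between hyx h3
        have hnum := invNum_descent hd
        obtain ⟨x', y', z', p1, p2, p3, p4⟩ :=
          pattern_step_high hd hzy hcase h3 h4 hyv hvx
        obtain ⟨l1, l2, rr1, rr2, hnp⟩ := ih (σ v * w) (by omega) ⟨x', y', z', p1, p2, p3, p4⟩
        exact ⟨v :: l1, v :: l2, reduced_cons_of hd rr1, reduced_cons_of hd rr2,
          fun hp => hnp hp.cons_inv⟩
      · have hxy1 : (x : ℕ) = (y : ℕ) + 1 := by omega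
        have hzy1 : (z : ℕ) + 1 < (y : ℕ) := by omega
        obtain ⟨u, hzu, huy, hd⟩ := exists_descent_between hzy h4
        have hnum := invNum_descent hd
        obtain ⟨x', y', z', p1, p2, p3, p4⟩ :=
          pattern_step_low hd hzy1 hyx h3 h4 hzu huy
        obtain ⟨l1, l2, rr1, rr2, hnp⟩ := ih (σ u * w) (by omega) ⟨x', y', z', p1, p2, p3, p4⟩
        exact ⟨u :: l1, u :: l2, reduced_cons_of hd rr1, reduced_cons_of hd rr2,
          fun hp => hnp hp.cons_inv⟩

lemma no_adjacent_descents {i j : Fin n} {w : Equiv.Perm (Fin (n + 1))}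
    (hav : Avoids w) (hij : (j : ℕ) = (i : ℕ) + 1)
    (di : Descent i w) (dj : Descent j w) : False := by
  apply hav
  have e : j.castSucc = i.succ := Fin.ext (by simp [hij])
  refine ⟨w⁻¹ j.succ, w⁻¹ i.succ, w⁻¹ i.castSucc, ?_, di, ?_, ?_⟩
  · rw [← e]; exact dj
  · rw [Perm.apply_inv_self, Perm.apply_inv_self]
    exact Fin.castSucc_lt_succ (i := i)
  · rw [Perm.apply_inv_self, Perm.apply_inv_self]
    simp [Fin.lt_def, hij]

lemma fc_core : ∀ N : ℕ, ∀ w : Equiv.Perm (Fin (n + 1)), invNum w ≤ N → Avoids w →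
    ∀ l l' : List (Fin n), IsReducedWord w l → IsReducedWord w l' →
      Relation.ReflTransGen CommStep l l' := by
  intro N
  induction N with
  | zero =>
    intro w hw _ l l' hl hl'
    have h1 : l.length = 0 := by
      have := (isReducedWord_iff.mp hl).2; omega
    have h2 : l'.length = 0 := by
      have := (isReducedWord_iff.mp hl').2; omega
    rw [List.length_eq_zero_iff] at h1 h2
    rw [h1, h2]
  | succ N ih =>
    intro w hw hav l l' hl hl'
    rcases l with _ | ⟨i, t⟩
    · have h0 : invNum w = 0 := by
        have := (isReducedWord_iff.mp hl).2; simpa using this.symm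
      have h2 : l'.length = 0 := by
        have := (isReducedWord_iff.mp hl').2; omega
      rw [List.length_eq_zero_iff] at h2
      rw [h2]
    · rcases l' with _ | ⟨j, t'⟩
      · have h0 : invNum w = 0 := by
          have := (isReducedWord_iff.mp hl').2; simpa using this.symm
        have := (isReducedWord_iff.mp hl).2
        simp [h0] at this
      · obtain ⟨di, ht⟩ := reduced_cons hl
        obtain ⟨dj, ht'⟩ := reduced_cons hl'
        have hwi : invNum (σ i * w) ≤ N := by
          have := invNum_descent di
          have := (isReducedWord_iff.mp hl).2
          omega
        have hwj : invNum (σ j * w) ≤ N := by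
          have := invNum_descent dj; omega
        have havi := avoids_of_descent di hav
        have havj := avoids_of_descent dj hav
        rcases eq_or_ne i j with rfl | hne
        · exact rtg_cons i (ih (σ i * w) hwi havi t t' ht ht')
        · have hvne : (i : ℕ) ≠ (j : ℕ) := fun hh => hne (Fin.ext hh)
          rcases (by omega : ((i : ℕ) + 2 ≤ (j : ℕ) ∨ (j : ℕ) + 2 ≤ (i : ℕ)) ∨
              ((j : ℕ) = (i : ℕ) + 1 ∨ (i : ℕ) = (j : ℕ) + 1)) with hfar | hadj
          · obtain ⟨m, hm1, hm2⟩ := exists_word (invNum (σ j * (σ i * w)))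
              (σ j * (σ i * w)) le_rfl
            have hm : IsReducedWord (σ j * (σ i * w)) m := isReducedWord_iff.mpr ⟨hm1, hm2⟩
            have dj1 : Descent j (σ i * w) := descent_of_sigma_far hfar dj
            have di1 : Descent i (σ j * w) := descent_of_sigma_far hfar.symm di
            have hred1 : IsReducedWord (σ i * w) (j :: m) := reduced_cons_of dj1 hm
            have r1 := ih (σ i * w) hwi havi t (j :: m) ht hred1
            have hm' : IsReducedWord (σ i * (σ j * w)) m := by
              have hc : σ j * (σ i * w) = σ i * (σ j * w) := by
                rw [← mul_assoc, ← mul_assoc, swap_commute hfar]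
              rw [← hc]; exact hm
            have hred2 : IsReducedWord (σ j * w) (i :: m) := reduced_cons_of di1 hm'
            have r2 := ih (σ j * w) hwj havj t' (i :: m) ht' hred2
            have hstep : CommStep (i :: j :: m) (j :: i :: m) :=
              ⟨[], m, i, j, hfar, rfl, rfl⟩
            exact ((rtg_cons i r1).trans (Relation.ReflTransGen.single hstep)).trans
              (rtg_symm (rtg_cons j r2))
          · exact absurd hadj (by
              rintro (hh | hh)
              · exact no_adjacent_descents hav hh di dj
              · exact no_adjacent_descents hav hh dj di)

end FCProof

/-- a permutation is fully commutative iff it avoids the pattern `321`. -/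
theorem fullyCommutative_iff_avoids_321 {n : ℕ} (w : Equiv.Perm (Fin (n + 1))) :
    FullyCommutative w ↔
      ¬ ∃ i j k : Fin (n + 1), i < j ∧ j < k ∧ w k < w j ∧ w j < w i := by
  constructor
  · intro hfc
    rintro ⟨i, j, k, hij, hjk, h1, h2⟩
    have hpat : ∃ x y z : Fin (n + 1), (z : ℕ) < (y : ℕ) ∧ (y : ℕ) < (x : ℕ) ∧
        w⁻¹ x < w⁻¹ y ∧ w⁻¹ y < w⁻¹ z := by
      refine ⟨w i, w j, w k, h1, h2, ?_, ?_⟩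
      · rw [FCProof.Perm.inv_apply_self, FCProof.Perm.inv_apply_self]; exact hij
      · rw [FCProof.Perm.inv_apply_self, FCProof.Perm.inv_apply_self]; exact hjk
    obtain ⟨l1, l2, r1, r2, hnp⟩ :=
      FCProof.exists_bad_words (FCProof.invNum w) w le_rfl hpat
    exact hnp (FCProof.rtg_perm (hfc l1 l2 r1 r2))
  · intro hav l l' hl hl'
    exact FCProof.fc_core (FCProof.invNum w) w le_rfl hav l l' hl hl'
end
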